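/- arXiv:1805.12119 — 7 statements merged into one kernel-verified Lean document; each statement's English description precedes it below -/
import Mathlib

section
/- Let G be a finite group and let Γ be an induced subgraph of the power graph 𝒢(G) whose vertex set contains the identity element of G. Then the edge-connectivity of Γ equals its minimum degree: κ'(Γ) = δ(Γ). -/
open Subgroup

/-- The power graph of a group: distinct `u`, `v` are adjacent iff one is a
positive integer power of the other. -/
def powerGraph (G : Type*) [Group G] : SimpleGraph G where
  Adj u v := u ≠ v ∧ ((∃ n : ℕ, 0 < n ∧ v = u ^ n) ∨ (∃ m : ℕ, 0 < m ∧ u = v ^ m))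
  symm := ⟨fun u v h => ⟨h.1.symm, h.2.symm⟩⟩
  loopless := ⟨fun u h => h.1 rfl⟩

/-- The degree of a vertex in a graph. -/
noncomputable def gDegree {V : Type*} (Γ : SimpleGraph V) (x : V) : ℕ :=
  (Γ.neighborSet x).ncard

/-- The minimum degree δ(Γ) of a graph. -/
noncomputable def gMinDegree {V : Type*} (Γ : SimpleGraph V) : ℕ :=
  sInf (Set.range (gDegree Γ))

/-- The edge-connectivity κ'(Γ): the least size of a set of edges whose deletion
disconnects the graph. -/
noncomputable def edgeConn {V : Type*} (Γ : SimpleGraph V) : ℕ :=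
  sInf {k | ∃ s : Finset (Sym2 V), s.card = k ∧ ↑s ⊆ Γ.edgeSet ∧
    ¬ (Γ.deleteEdges ↑s).Connected}

/-- The vertex connectivity κ(Γ): the least size of a set of vertices whose deletion
disconnects the graph or leaves at most one vertex. -/
noncomputable def vertConn {V : Type*} (Γ : SimpleGraph V) : ℕ :=
  sInf {k | ∃ S : Set V, S.Finite ∧ S.ncard = k ∧
    (¬ (Γ.induce Sᶜ).Preconnected ∨ Sᶜ.Subsingleton)}

/-- A nontrivial connected graph is minimally edge-connected if deleting any edge
drops the edge-connectivity by exactly one. -/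
def MinimallyEdgeConnected {V : Type*} (Γ : SimpleGraph V) : Prop :=
  Nontrivial V ∧ Γ.Connected ∧
    ∀ e ∈ Γ.edgeSet, edgeConn (Γ.deleteEdges {e}) = edgeConn Γ - 1

/-- A nontrivial connected graph is minimally connected if deleting any edge
drops the vertex connectivity by exactly one. -/
def MinimallyConnected {V : Type*} (Γ : SimpleGraph V) : Prop :=
  Nontrivial V ∧ Γ.Connected ∧
    ∀ e ∈ Γ.edgeSet, vertConn (Γ.deleteEdges {e}) = vertConn Γ - 1

/-- `S` is a separating set of `Γ` if deleting the vertices of `S` leaves a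
disconnected graph. -/
def IsSeparatingSet {V : Type*} (Γ : SimpleGraph V) (S : Set V) : Prop :=
  ¬ (Γ.induce Sᶜ).Preconnected

/-- `S` is a minimum separating set of `Γ`. -/
def IsMinSeparatingSet {V : Type*} (Γ : SimpleGraph V) (S : Set V) : Prop :=
  IsSeparatingSet Γ S ∧ ∀ T : Set V, IsSeparatingSet Γ T → S.ncard ≤ T.ncard

/-- `y` generates a maximal cyclic subgroup of `G`: the cyclic subgroup `⟨y⟩` is
not properly contained in any cyclic subgroup. -/
def IsMaxCyclicGen {G : Type*} [Group G] (y : G) : Prop :=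
  ∀ z : G, zpowers y ≤ zpowers z → zpowers y = zpowers z

/-- A subgroup is maximal cyclic if it is cyclic and not properly contained in
any cyclic subgroup. -/
def IsMaximalCyclicSubgroup {G : Type*} [Group G] (H : Subgroup G) : Prop :=
  (∃ y : G, H = zpowers y) ∧ ∀ z : G, H ≤ zpowers z → H = zpowers z

section AuxKey
variable {V : Type*}

lemma isolated_not_reachable (H : SimpleGraph V) {x y : V}
    (hx : ∀ z, ¬ H.Adj x z) (hxy : x ≠ y) : ¬ H.Reachable x y := by
  rintro ⟨w⟩
  cases w with
  | nil => exact hxy rfl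
  | cons h _ => exact hx _ h

lemma key_edgeConn [Fintype V] (Γ : SimpleGraph V) (v0 : V)
    (huniv : ∀ w, w ≠ v0 → Γ.Adj v0 w) :
    edgeConn Γ = gMinDegree Γ := by
  classical
  have hdeg : ∀ x : V, gDegree Γ x = (Γ.neighborSet x).toFinset.card := by
    intro x; exact Set.ncard_eq_toFinset_card' _
  rcases subsingleton_or_nontrivial V with hsub | hnt
  · have hδ : gMinDegree Γ = 0 := by
      have h0 : gDegree Γ v0 = 0 := by
        rw [hdeg]
        simp only [Finset.card_eq_zero]
        ext z
        simp only [Set.mem_toFinset, SimpleGraph.mem_neighborSet, Finset.notMem_empty,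
          iff_false]
        intro h
        exact h.ne (Subsingleton.elim _ _)
      exact Nat.sInf_eq_zero.mpr (Or.inl ⟨v0, h0⟩)
    have hκ : edgeConn Γ = 0 := by
      apply Nat.sInf_eq_zero.mpr
      right
      ext k
      simp only [Set.mem_setOf_eq, Set.mem_empty_iff_false, iff_false]
      rintro ⟨E, _, _, hdis⟩
      exact hdis ((SimpleGraph.connected_iff _).mpr
        ⟨fun a b => (Subsingleton.elim a b) ▸ SimpleGraph.Reachable.refl a, ⟨v0⟩⟩)
    rw [hδ, hκ]
  · -- Step A: deleting all edges at x disconnects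
    have cutA : ∀ x : V, ∃ E : Finset (Sym2 V), E.card = gDegree Γ x ∧ ↑E ⊆ Γ.edgeSet ∧
        ¬ (Γ.deleteEdges ↑E).Connected := by
      intro x
      obtain ⟨y, hy⟩ := exists_ne x
      set N := (Γ.neighborSet x).toFinset with hN
      refine ⟨N.image (fun z => s(x, z)), ?_, ?_, ?_⟩
      · rw [Finset.card_image_of_injective _ (fun a b h => Sym2.congr_right.mp h), hdeg]
      · intro e he
        simp only [Finset.coe_image, Set.mem_image, Finset.mem_coe, hN,
          Set.mem_toFinset, SimpleGraph.mem_neighborSet] at he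
        obtain ⟨z, hz, rfl⟩ := he
        exact hz
      · intro hcon
        refine isolated_not_reachable _ (fun z hz => ?_) hy.symm (hcon.preconnected x y)
        rw [SimpleGraph.deleteEdges_adj] at hz
        refine hz.2 ?_
        simp only [Finset.coe_image, Set.mem_image, Finset.mem_coe, hN, Set.mem_toFinset,
          SimpleGraph.mem_neighborSet]
        exact ⟨z, hz.1, rfl⟩
    have hδle : ∀ x, gMinDegree Γ ≤ gDegree Γ x := fun x => Nat.sInf_le ⟨x, rfl⟩
    -- edgeConn ≤ gMinDegree
    have hrange : (Set.range (gDegree Γ)).Nonempty := ⟨_, ⟨v0, rfl⟩⟩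
    obtain ⟨x0, hx0⟩ := Nat.sInf_mem hrange
    have hle1 : edgeConn Γ ≤ gMinDegree Γ := by
      obtain ⟨E, h1, h2, h3⟩ := cutA x0
      exact Nat.sInf_le ⟨E, by rw [h1]; exact hx0, h2, h3⟩
    -- gMinDegree ≤ edgeConn
    have hSne : {k | ∃ E : Finset (Sym2 V), E.card = k ∧ ↑E ⊆ Γ.edgeSet ∧
        ¬ (Γ.deleteEdges ↑E).Connected}.Nonempty := by
      obtain ⟨E, h1, h2, h3⟩ := cutA v0
      exact ⟨_, E, h1, h2, h3⟩
    obtain ⟨E, hcard, hsub, hdis⟩ := Nat.sInf_mem hSne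
    set Γ' := Γ.deleteEdges ↑E with hΓ'
    rw [SimpleGraph.connected_iff] at hdis
    push_neg at hdis
    have hpre : ¬ Γ'.Preconnected := fun h => (hdis h).false v0
    rw [SimpleGraph.Preconnected] at hpre
    push_neg at hpre
    obtain ⟨a, b, hab⟩ := hpre
    have hu : ∃ u, ¬ Γ'.Reachable v0 u := by
      by_contra h
      push_neg at h
      exact hab ((h a).symm.trans (h b))
    obtain ⟨u, hu⟩ := hu
    have huv0 : u ≠ v0 := by rintro rfl; exact hu (SimpleGraph.Reachable.refl _)
    set U : Finset V := Finset.univ.filter (fun w => ¬ Γ'.Reachable v0 w) with hUdef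
    have hUu : u ∈ U := by simp [hUdef, hu]
    have hUv0 : v0 ∉ U := by
      simp only [hUdef, Finset.mem_filter, Finset.mem_univ, true_and, not_not]
      exact SimpleGraph.Reachable.refl v0
    have hUne : ∀ w ∈ U, w ≠ v0 := by rintro w hw rfl; exact hUv0 hw
    set F1 : Finset (Sym2 V) := U.image (fun w => s(v0, w)) with hF1def
    have hF1card : F1.card = U.card :=
      Finset.card_image_of_injective _ (fun a b h => Sym2.congr_right.mp h)
    have hF1E : F1 ⊆ E := by
      intro e he
      simp only [hF1def, Finset.mem_image] at he
      obtain ⟨w, hw, rfl⟩ := he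
      by_contra hne
      have hadj : Γ'.Adj v0 w := by
        rw [hΓ', SimpleGraph.deleteEdges_adj]
        exact ⟨huniv w (hUne w hw), by simpa using hne⟩
      simp only [hUdef, Finset.mem_filter] at hw
      exact hw.2 hadj.reachable
    set N : Finset V := (Γ.neighborSet u).toFinset with hNdef
    set N2 : Finset V := N.filter (fun x => Γ'.Reachable v0 x ∧ x ≠ v0) with hN2def
    set F2 : Finset (Sym2 V) := N2.image (fun x => s(u, x)) with hF2def
    have hF2card : F2.card = N2.card :=
      Finset.card_image_of_injective _ (fun a b h => Sym2.congr_right.mp h)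
    have hF2E : F2 ⊆ E := by
      intro e he
      simp only [hF2def, Finset.mem_image] at he
      obtain ⟨x, hx, rfl⟩ := he
      simp only [hN2def, Finset.mem_filter, hNdef, Set.mem_toFinset,
        SimpleGraph.mem_neighborSet] at hx
      by_contra hne
      have hadj : Γ'.Adj u x := by
        rw [hΓ', SimpleGraph.deleteEdges_adj]
        exact ⟨hx.1, by simpa using hne⟩
      exact hu (hx.2.1.trans hadj.symm.reachable)
    have hdisj : Disjoint F1 F2 := by
      rw [Finset.disjoint_left]
      intro e he1 he2
      simp only [hF1def, Finset.mem_image] at he1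
      simp only [hF2def, Finset.mem_image] at he2
      obtain ⟨w, hw, rfl⟩ := he1
      obtain ⟨x, hx, hxe⟩ := he2
      simp only [hN2def, Finset.mem_filter] at hx
      rw [Sym2.eq_iff] at hxe
      rcases hxe with ⟨h1, _⟩ | ⟨_, h2⟩
      · exact huv0 h1
      · exact hx.2.2 h2
    have hNsub : N ⊆ N2 ∪ (U.erase u) ∪ {v0} := by
      intro x hx
      have hadjux : Γ.Adj u x := by
        simpa only [hNdef, Set.mem_toFinset, SimpleGraph.mem_neighborSet] using hx
      by_cases hr : Γ'.Reachable v0 x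
      · by_cases hxv : x = v0
        · simp [hxv]
        · exact Finset.mem_union_left _ (Finset.mem_union_left _
            (by simp [hN2def, hx, hr, hxv]))
      · refine Finset.mem_union_left _ (Finset.mem_union_right _ ?_)
        rw [Finset.mem_erase]
        exact ⟨hadjux.ne', by simp [hUdef, hr]⟩
    have hUpos : 1 ≤ U.card := Finset.card_pos.mpr ⟨u, hUu⟩
    have hNle : N.card ≤ N2.card + U.card := by
      calc N.card ≤ (N2 ∪ (U.erase u) ∪ {v0}).card := Finset.card_le_card hNsub
        _ ≤ (N2 ∪ (U.erase u)).card + 1 := by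
            refine le_trans (Finset.card_union_le _ _) ?_; simp
        _ ≤ N2.card + (U.erase u).card + 1 := by
            have := Finset.card_union_le N2 (U.erase u); omega
        _ = N2.card + (U.card - 1) + 1 := by rw [Finset.card_erase_of_mem hUu]
        _ ≤ N2.card + U.card := by omega
    have hcardE : N.card ≤ E.card := by
      have h1 : (F1 ∪ F2).card = F1.card + F2.card := Finset.card_union_of_disjoint hdisj
      have h2 : (F1 ∪ F2).card ≤ E.card :=
        Finset.card_le_card (Finset.union_subset hF1E hF2E)
      omega
    have hδN : gMinDegree Γ ≤ N.card := by
      rw [hNdef, ← hdeg u]; exact hδle u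
    exact le_antisymm hle1 (le_trans (le_trans hδN hcardE) (le_of_eq hcard))

end AuxKey

/-- For any induced subgraph of the power graph of a finite group containing the
identity, the edge-connectivity equals the minimum degree. -/
theorem stmt_7 (G : Type*) [Group G] [Fintype G] (s : Set G) (hs : (1 : G) ∈ s) :
    edgeConn ((powerGraph G).induce s) = gMinDegree ((powerGraph G).induce s) := by
  classical
  haveI : Fintype ↥s := (Set.toFinite s).fintype
  refine key_edgeConn _ (⟨1, hs⟩ : ↥s) (fun w hw => ?_)
  show (powerGraph G).Adj 1 (w : G)
  refine ⟨fun h => hw (Subtype.ext h.symm), Or.inr ⟨orderOf (w : G), orderOf_pos _, ?_⟩⟩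
  exact (pow_orderOf_eq_one _).symm
end

section
/- Let G be a finite group. Every minimum separating set of the power graph 𝒢(G) is of the form [x₁] ∪ ⋯ ∪ [x_s] for some elements x₁, …, x_s of G, where [x] denotes the set of generators of the cyclic subgroup ⟨x⟩. -/
open Subgroup

lemma powerGraph_adj_iff {G : Type*} [Group G] [Fintype G] (u v : G) :
    (powerGraph G).Adj u v ↔ u ≠ v ∧ (v ∈ zpowers u ∨ u ∈ zpowers v) := by
  constructor
  · rintro ⟨hne, h | h⟩
    · obtain ⟨n, _, rfl⟩ := h
      exact ⟨hne, Or.inl ⟨(n : ℤ), by simp⟩⟩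
    · obtain ⟨m, _, rfl⟩ := h
      exact ⟨hne, Or.inr ⟨(m : ℤ), by simp⟩⟩
  · rintro ⟨hne, h⟩
    refine ⟨hne, ?_⟩
    have key : ∀ a b : G, b ∈ zpowers a → ∃ n : ℕ, 0 < n ∧ b = a ^ n := by
      intro a b hb
      rw [← mem_powers_iff_mem_zpowers] at hb
      obtain ⟨n, rfl⟩ := hb
      rcases Nat.eq_zero_or_pos n with rfl | hn
      · exact ⟨orderOf a, orderOf_pos a, by simp [pow_orderOf_eq_one]⟩
      · exact ⟨n, hn, rfl⟩
    rcases h with h | h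
    · exact Or.inl (key u v h)
    · exact Or.inr (key v u h)

lemma minSep_closed {G : Type*} [Group G] [Fintype G] (S : Set G)
    (hS : IsMinSeparatingSet (powerGraph G) S) :
    ∀ g ∈ S, ∀ h : G, zpowers h = zpowers g → h ∈ S := by
  classical
  intro g hg h hzp
  by_contra hhS
  have hne : h ≠ g := fun e => hhS (e ▸ hg)
  set T : Set G := S \ {g} with hT
  have hsub : Sᶜ ⊆ Tᶜ := Set.compl_subset_compl.mpr Set.diff_subset
  let f : (Tᶜ : Set G) → (Sᶜ : Set G) := fun a =>
    if ha : (a : G) = g then ⟨h, hhS⟩ else ⟨a, fun haS => a.2 ⟨haS, ha⟩⟩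
  have transfer : ∀ b : G, b ≠ h → (powerGraph G).Adj g b → (powerGraph G).Adj h b := by
    intro b hbh hadj
    rw [powerGraph_adj_iff] at hadj ⊢
    refine ⟨hbh.symm, ?_⟩
    rcases hadj.2 with hb | hb
    · exact Or.inl (by rw [hzp]; exact hb)
    · refine Or.inr (zpowers_le.mp ?_)
      rw [hzp]
      exact zpowers_le.mpr hb
  have step : ∀ a b : (Tᶜ : Set G), ((powerGraph G).induce Tᶜ).Adj a b →
      ((powerGraph G).induce Sᶜ).Reachable (f a) (f b) := by
    intro a b hab
    have hab' : (powerGraph G).Adj (a : G) (b : G) := hab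
    by_cases hag : (a : G) = g
    · by_cases hbg : (b : G) = g
      · exact absurd (hag.trans hbg.symm) hab'.ne
      · by_cases hbh : (b : G) = h
        · have : f a = f b := by
            simp only [f, dif_pos hag, dif_neg hbg]
            exact Subtype.ext hbh.symm
          rw [this]
        · have hadj : (powerGraph G).Adj h (b : G) :=
            transfer b hbh (hag ▸ hab')
          have : ((powerGraph G).induce Sᶜ).Adj (f a) (f b) := by
            simp only [f, dif_pos hag, dif_neg hbg]
            exact hadj
          exact this.reachable
    · by_cases hbg : (b : G) = g
      · by_cases hah : (a : G) = h
        · have : f a = f b := by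
            simp only [f, dif_pos hbg, dif_neg hag]
            exact Subtype.ext hah
          rw [this]
        · have hadj : (powerGraph G).Adj h (a : G) :=
            transfer a hah (hbg ▸ hab'.symm)
          have : ((powerGraph G).induce Sᶜ).Adj (f a) (f b) := by
            simp only [f, dif_pos hbg, dif_neg hag]
            exact hadj.symm
          exact this.reachable
      · have : ((powerGraph G).induce Sᶜ).Adj (f a) (f b) := by
          simp only [f, dif_neg hag, dif_neg hbg]
          exact hab'
        exact this.reachable
  have lift : ∀ a b : (Tᶜ : Set G), ((powerGraph G).induce Tᶜ).Reachable a b →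
      ((powerGraph G).induce Sᶜ).Reachable (f a) (f b) := by
    intro a b hr
    obtain ⟨w⟩ := hr
    induction w with
    | nil => exact SimpleGraph.Reachable.refl _
    | cons hadj p ih => exact (step _ _ hadj).trans ih
  have hTcard : T.ncard < S.ncard :=
    Set.ncard_diff_singleton_lt_of_mem hg (Set.toFinite S)
  have hTsep : ¬ IsSeparatingSet (powerGraph G) T := fun hsep =>
    absurd (hS.2 T hsep) (not_le.mpr hTcard)
  have hTpre : ((powerGraph G).induce Tᶜ).Preconnected := not_not.mp hTsep
  apply hS.1
  intro u v
  have key := lift ⟨u, hsub u.2⟩ ⟨v, hsub v.2⟩ (hTpre _ _)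
  have hfu : f ⟨u, hsub u.2⟩ = u := by
    have hug : (u : G) ≠ g := fun e => u.2 (e ▸ hg)
    simp only [f, dif_neg hug]
  have hfv : f ⟨v, hsub v.2⟩ = v := by
    have hvg : (v : G) ≠ g := fun e => v.2 (e ▸ hg)
    simp only [f, dif_neg hvg]
  rwa [hfu, hfv] at key

/-- Every minimum separating set of the power graph of a finite group is a union
of sets of generators `[x] = {g | ⟨g⟩ = ⟨x⟩}` of cyclic subgroups. -/
theorem stmt_8 (G : Type*) [Group G] [Fintype G] (S : Set G)
    (hS : IsMinSeparatingSet (powerGraph G) S) :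
    ∃ T : Finset G, S = ⋃ x ∈ T, {g : G | zpowers g = zpowers x} := by
  classical
  refine ⟨S.toFinset, ?_⟩
  ext a
  simp only [Set.mem_iUnion, Set.mem_setOf_eq, Set.mem_toFinset]
  constructor
  · intro ha
    exact ⟨a, ha, rfl⟩
  · rintro ⟨x, hx, hax⟩
    exact minSep_closed S hS x hx a hax
end

section
/- For a finite group G, the graph 𝒢*(G), obtained from the power graph 𝒢(G) by deleting the identity vertex, is regular if and only if G is a cyclic group of prime power order or G is a group of prime exponent. -/
open Subgroup

section Aux
variable {G : Type*} [Group G] [Fintype G]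

def nbhd (x : G) : Set G := {y | y ≠ 1 ∧ y ≠ x ∧ (y ∈ zpowers x ∨ x ∈ zpowers y)}
def contSet (x : G) : Set G := {y | x ∈ zpowers y}

lemma exists_pos_pow_iff (u v : G) : (∃ n : ℕ, 0 < n ∧ v = u ^ n) ↔ v ∈ zpowers u := by
  constructor
  · rintro ⟨n, -, rfl⟩
    exact ⟨(n : ℤ), by simp⟩
  · intro h
    rw [← mem_powers_iff_mem_zpowers] at h
    obtain ⟨n, rfl⟩ := h
    rcases Nat.eq_zero_or_pos n with rfl | hn
    · exact ⟨orderOf u, orderOf_pos u, by simp [pow_orderOf_eq_one]⟩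
    · exact ⟨n, hn, rfl⟩

lemma pg_adj_iff (u v : G) :
    (powerGraph G).Adj u v ↔ u ≠ v ∧ (v ∈ zpowers u ∨ u ∈ zpowers v) := by
  have : (powerGraph G).Adj u v ↔ u ≠ v ∧
      ((∃ n : ℕ, 0 < n ∧ v = u ^ n) ∨ (∃ m : ℕ, 0 < m ∧ u = v ^ m)) := Iff.rfl
  rw [this, exists_pos_pow_iff, exists_pos_pow_iff]

lemma deg_eq (x : ↥{g : G | g ≠ 1}) :
    gDegree ((powerGraph G).induce {g : G | g ≠ 1}) x = (nbhd x.val).ncard := by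
  have hadj : ∀ a b : ↥{g : G | g ≠ 1},
      ((powerGraph G).induce {g : G | g ≠ 1}).Adj a b ↔ (powerGraph G).Adj a.val b.val :=
    fun a b => Iff.rfl
  have himg : Subtype.val '' (((powerGraph G).induce {g : G | g ≠ 1}).neighborSet x)
      = nbhd x.val := by
    ext y
    simp only [Set.mem_image, SimpleGraph.mem_neighborSet, hadj, pg_adj_iff, nbhd,
      Set.mem_setOf_eq]
    constructor
    · rintro ⟨⟨y, hy⟩, ⟨hne, hor⟩, rfl⟩
      exact ⟨hy, fun h => hne h.symm, hor⟩
    · rintro ⟨hy1, hyx, hor⟩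
      exact ⟨⟨y, hy1⟩, ⟨fun h => hyx h.symm, hor⟩, rfl⟩
  rw [gDegree, ← himg, Set.ncard_image_of_injOn Subtype.val_injective.injOn]

lemma ncard_zpowers (x : G) : ((zpowers x : Subgroup G) : Set G).ncard = orderOf x := by
  rw [← Nat.card_coe_set_eq]
  exact Nat.card_zpowers x

lemma pow_card_sol_le (y : G) (d : ℕ) (hd : 0 < d) :
    {w : G | w ∈ zpowers y ∧ w ^ d = 1}.ncard ≤ d := by
  classical
  have : {w : G | w ∈ zpowers y ∧ w ^ d = 1}
      = Subtype.val '' {w : ↥(zpowers y) | w ^ d = 1} := by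
    ext w
    constructor
    · rintro ⟨h1, h2⟩
      exact ⟨⟨w, h1⟩, by simpa using h2, rfl⟩
    · rintro ⟨⟨w, hw⟩, h2, rfl⟩
      exact ⟨hw, by simpa using h2⟩
  rw [this, Set.ncard_image_of_injOn Subtype.val_injective.injOn,
    Set.ncard_eq_toFinset_card']
  haveI : IsCyclic ↥(zpowers y) := by
    refine ⟨⟨⟨y, mem_zpowers y⟩, ?_⟩⟩
    rintro ⟨x, hx⟩
    obtain ⟨k, hk⟩ := hx
    exact ⟨k, Subtype.ext (by simpa using hk)⟩
  have := IsCyclic.card_pow_eq_one_le (α := ↥(zpowers y)) (n := d) hd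
  refine le_trans (le_of_eq ?_) this
  congr 1
  ext w
  simp

/-- In the cyclic group `zpowers y`, the cyclic subgroup generated by `w` equals the
set of solutions of `w' ^ orderOf w = 1`. -/
lemma zpowers_eq_solset {y w : G} (hw : w ∈ zpowers y) :
    ((zpowers w : Subgroup G) : Set G) = {w' : G | w' ∈ zpowers y ∧ w' ^ orderOf w = 1} := by
  apply Set.eq_of_subset_of_ncard_le
  · intro w' hw'
    refine ⟨(zpowers_le.mpr hw) hw', ?_⟩
    exact orderOf_dvd_iff_pow_eq_one.mp (orderOf_dvd_of_mem_zpowers hw')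
  · calc {w' : G | w' ∈ zpowers y ∧ w' ^ orderOf w = 1}.ncard ≤ orderOf w :=
        pow_card_sol_le y _ (orderOf_pos w)
      _ = ((zpowers w : Subgroup G) : Set G).ncard := (ncard_zpowers w).symm
  · exact Set.toFinite _

lemma zpowers_eq_of_mem_of_orderOf_eq {y u v : G} (hu : u ∈ zpowers y) (hv : v ∈ zpowers y)
    (h : orderOf u = orderOf v) : zpowers u = zpowers v := by
  apply SetLike.ext'
  rw [zpowers_eq_solset hu, zpowers_eq_solset hv, h]

lemma mem_zpowers_of_mem_of_pow {y u x : G} (hu : u ∈ zpowers y) (hx : x ∈ zpowers y)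
    (hpow : x ^ orderOf u = 1) : x ∈ zpowers u := by
  have := zpowers_eq_solset hu
  have hmem : x ∈ ((zpowers u : Subgroup G) : Set G) := by
    rw [this]; exact ⟨hx, hpow⟩
  exact hmem

lemma nbhd_eq (x : G) :
    nbhd x = (((zpowers x : Subgroup G) : Set G) ∪ contSet x) \ {1, x} := by
  ext y
  simp only [nbhd, contSet, Set.mem_diff, Set.mem_union, Set.mem_insert_iff,
    Set.mem_setOf_eq, Set.mem_singleton_iff, SetLike.mem_coe]
  tauto

lemma exists_maxgen (x : G) : ∃ y, x ∈ zpowers y ∧ IsMaxCyclicGen y := by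
  classical
  obtain ⟨y, hy, hmax⟩ := Finset.exists_max_image
    (Finset.univ.filter fun y : G => x ∈ zpowers y) orderOf
    ⟨x, by simp [mem_zpowers]⟩
  simp only [Finset.mem_filter, Finset.mem_univ, true_and] at hy hmax
  refine ⟨y, hy, fun z hz => ?_⟩
  have hxz : x ∈ zpowers z := hz (hy)
  have h1 : orderOf z ≤ orderOf y := hmax z hxz
  refine SetLike.ext' (Set.eq_of_subset_of_ncard_le (SetLike.coe_subset_coe.mpr hz) ?_ (Set.toFinite _))
  rw [ncard_zpowers, ncard_zpowers]
  exact h1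

lemma maxgen_contSet_subset {y : G} (hy : IsMaxCyclicGen y) :
    contSet y ⊆ (zpowers y : Subgroup G) := by
  intro z hz
  have : zpowers y ≤ zpowers z := zpowers_le.mpr hz
  rw [hy z this]
  exact mem_zpowers z

lemma nbhd_subset_zpowers {x : G} (h : contSet x ⊆ ((zpowers x : Subgroup G) : Set G))
    (hx1 : x ≠ 1) : (nbhd x).ncard = orderOf x - 2 := by
  have h1 : nbhd x = ((zpowers x : Subgroup G) : Set G) \ {1, x} := by
    rw [nbhd_eq]
    congr 1
    rw [Set.union_eq_self_of_subset_right h]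
  have hsub : {1, x} ⊆ ((zpowers x : Subgroup G) : Set G) := by
    intro z hz
    rcases hz with rfl | hz
    · exact (zpowers x).one_mem
    · rw [Set.mem_singleton_iff] at hz
      subst hz
      exact mem_zpowers z
  rw [h1, Set.ncard_diff hsub, Set.ncard_pair (Ne.symm hx1), ncard_zpowers]

lemma nbhd_maxgen {y : G} (hy : IsMaxCyclicGen y) (hy1 : y ≠ 1) :
    (nbhd y).ncard = orderOf y - 2 :=
  nbhd_subset_zpowers (maxgen_contSet_subset hy) hy1

/-- Easy direction: prime exponent implies regular. -/
lemma regular_of_prime_exponent {p : ℕ} (hp : p.Prime) (hexp : ∀ x : G, x ≠ 1 → orderOf x = p) :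
    ∀ x y : G, x ≠ 1 → y ≠ 1 → (nbhd x).ncard = (nbhd y).ncard := by
  have key : ∀ x : G, x ≠ 1 → (nbhd x).ncard = p - 2 := by
    intro x hx
    have hmax : contSet x ⊆ ((zpowers x : Subgroup G) : Set G) := by
      intro z hz
      have hz1 : z ≠ 1 := by
        rintro rfl
        have h' : x ∈ zpowers (1 : G) := hz
        rw [zpowers_one_eq_bot, Subgroup.mem_bot] at h'
        exact hx h'
      have : zpowers x = zpowers z :=
        zpowers_eq_of_mem_of_orderOf_eq hz (mem_zpowers z)
          ((hexp x hx).trans (hexp z hz1).symm)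
      rw [SetLike.mem_coe, this]
      exact mem_zpowers z
    rw [nbhd_subset_zpowers hmax hx, hexp x hx]
  intro x y hx hy
  rw [key x hx, key y hy]

/-- Easy direction: cyclic of prime power order implies regular. -/
lemma regular_of_cyclic_ppow (hc : IsCyclic G) {p k : ℕ} (hp : p.Prime)
    (hcard : Nat.card G = p ^ k) :
    ∀ x y : G, x ≠ 1 → y ≠ 1 → (nbhd x).ncard = (nbhd y).ncard := by
  obtain ⟨c, hc⟩ := hc.exists_generator
  have horder : ∀ x : G, ∃ i, i ≤ k ∧ orderOf x = p ^ i := by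
    intro x
    have : orderOf x ∣ p ^ k := hcard ▸ orderOf_dvd_natCard x
    obtain ⟨i, hik, hi⟩ := (Nat.dvd_prime_pow hp).mp this
    exact ⟨i, hik, hi⟩
  have hcomp : ∀ x y : G, orderOf x ≤ orderOf y → x ∈ zpowers y := by
    intro x y hxy
    obtain ⟨i, -, hi⟩ := horder x
    obtain ⟨j, -, hj⟩ := horder y
    have hij : i ≤ j := by
      rw [hi, hj] at hxy
      exact (Nat.pow_le_pow_iff_right hp.one_lt).mp hxy
    set u := y ^ (p ^ (j - i)) with hu
    have hou : orderOf u = p ^ i := by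
      rw [hu, orderOf_pow, hj, Nat.gcd_eq_right (pow_dvd_pow p (Nat.sub_le j i)),
        Nat.pow_div (Nat.sub_le j i) hp.pos]
      congr 1
      omega
    have hxu : x ∈ zpowers u := by
      refine mem_zpowers_of_mem_of_pow (y := c) (hc u) (hc x) ?_
      rw [hou, ← hi]
      exact pow_orderOf_eq_one x
    exact (zpowers_le.mpr (pow_mem (mem_zpowers y) _)) hxu
  have key : ∀ x : G, x ≠ 1 → nbhd x = Set.univ \ {1, x} := by
    intro x hx
    ext y
    simp only [nbhd, Set.mem_diff, Set.mem_univ, true_and, Set.mem_insert_iff,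
      Set.mem_singleton_iff, Set.mem_setOf_eq]
    constructor
    · rintro ⟨h1, h2, -⟩
      exact not_or.mpr ⟨h1, h2⟩
    · intro h
      push_neg at h
      refine ⟨h.1, h.2, ?_⟩
      rcases le_total (orderOf y) (orderOf x) with hle | hle
      · exact Or.inl (hcomp y x hle)
      · exact Or.inr (hcomp x y hle)
  have huniv : ∀ x : G, x ≠ 1 → (Set.univ \ {1, x} : Set G).ncard = Nat.card G - 2 := by
    intro x hx
    rw [Set.ncard_diff (Set.subset_univ _), Set.ncard_pair (Ne.symm hx), Set.ncard_univ]
  intro x y hx hy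
  rw [key x hx, key y hy, huniv x hx, huniv y hy]

section Forward

lemma contSet_ncard_of_prime_order {m : ℕ} (hm : 2 ≤ m)
    (hdeg : ∀ x : G, x ≠ 1 → (nbhd x).ncard = m - 2)
    {q : ℕ} (hq : q.Prime) {z : G} (hz : orderOf z = q) :
    (contSet z).ncard = m - 1 := by
  have hz1 : z ≠ 1 := by
    intro h
    rw [h, orderOf_one] at hz
    exact hq.one_lt.ne' hz.symm
  have h1 : nbhd z = contSet z \ {z} := by
    rw [nbhd_eq]
    have hsub : ((zpowers z : Subgroup G) : Set G) ∪ contSet z = contSet z ∪ {1} := by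
      apply Set.Subset.antisymm
      · rintro w (hw | hw)
        · rcases eq_or_ne w 1 with rfl | hw1
          · exact Or.inr rfl
          · left
            have how : orderOf w = q := by
              have : orderOf w ∣ q := hz ▸ orderOf_dvd_of_mem_zpowers hw
              rcases (Nat.Prime.eq_one_or_self_of_dvd hq _ this) with h | h
              · exact absurd (orderOf_eq_one_iff.mp h) hw1
              · exact h
            have : zpowers w = zpowers z :=
              zpowers_eq_of_mem_of_orderOf_eq hw (mem_zpowers z) (how.trans hz.symm)
            exact (this ▸ mem_zpowers z : z ∈ zpowers w)
        · exact Or.inl hw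
      · rintro w (hw | hw)
        · exact Or.inr hw
        · rw [Set.mem_singleton_iff] at hw
          subst hw
          exact Or.inl (zpowers z).one_mem
    rw [hsub]
    have h1notin : (1 : G) ∉ contSet z := by
      intro h
      have h' : z ∈ zpowers (1 : G) := h
      rw [zpowers_one_eq_bot, Subgroup.mem_bot] at h'
      exact hz1 h'
    ext w
    simp only [Set.mem_diff, Set.mem_union, Set.mem_insert_iff, Set.mem_singleton_iff]
    constructor
    · rintro ⟨hw | hw, hne⟩
      · push_neg at hne
        exact ⟨hw, hne.2⟩
      · exact absurd (Or.inl hw) hne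
    · rintro ⟨hw, hne⟩
      refine ⟨Or.inl hw, ?_⟩
      push_neg
      exact ⟨fun h => h1notin (h ▸ hw), hne⟩
  have hzmem : z ∈ contSet z := mem_zpowers z
  have := hdeg z hz1
  rw [h1, Set.ncard_diff_singleton_of_mem hzmem] at this
  have hpos : 0 < (contSet z).ncard := (Set.ncard_pos (Set.toFinite _)).mpr ⟨z, hzmem⟩
  omega

lemma contSet_eq_maxgen {m : ℕ} (hm : 2 ≤ m)
    (hdeg : ∀ x : G, x ≠ 1 → (nbhd x).ncard = m - 2)
    (hdvd : ∀ x : G, orderOf x ∣ m)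
    {p b : ℕ} (hp : p.Prime) (hmb : m = p ^ b)
    {q : ℕ} (hq : q.Prime) {z : G} (hz : orderOf z = q)
    {y : G} (hy : IsMaxCyclicGen y) (hym : orderOf y = m) (hzy : z ∈ zpowers y) :
    contSet z = ((zpowers y : Subgroup G) : Set G) \ {1} := by
  -- note q = p automatically since q = orderOf z ∣ m = p ^ b
  have hqp : q = p := by
    have h1 : q ∣ p ^ b := hmb ▸ hz ▸ hdvd z
    exact (Nat.prime_dvd_prime_iff_eq hq hp).mp (hq.dvd_of_dvd_pow h1)
  rw [hqp] at hz
  have hsub : ((zpowers y : Subgroup G) : Set G) \ {1} ⊆ contSet z := by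
    rintro w ⟨hw, hw1⟩
    rw [Set.mem_singleton_iff] at hw1
    have hwdvd : orderOf w ∣ p ^ b := hmb ▸ hdvd w
    obtain ⟨c, hcb, hc⟩ := (Nat.dvd_prime_pow hp).mp hwdvd
    have hc1 : 1 ≤ c := by
      rcases Nat.eq_zero_or_pos c with rfl | h
      · rw [pow_zero] at hc
        exact absurd (orderOf_eq_one_iff.mp hc) hw1
      · exact h
    set w' := w ^ (p ^ (c - 1)) with hw'
    have how' : orderOf w' = p := by
      rw [hw', orderOf_pow, hc, Nat.gcd_eq_right (pow_dvd_pow p (Nat.sub_le c 1)),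
        Nat.pow_div (Nat.sub_le c 1) hp.pos, show c - (c - 1) = 1 by omega, pow_one]
    have hw'y : w' ∈ zpowers y := pow_mem hw _
    have : zpowers z = zpowers w' :=
      zpowers_eq_of_mem_of_orderOf_eq hzy hw'y (hz.trans how'.symm)
    have hzw' : z ∈ zpowers w' := this ▸ mem_zpowers z
    exact (zpowers_le.mpr (pow_mem (mem_zpowers w) _)) hzw'
  have hcard1 : (((zpowers y : Subgroup G) : Set G) \ {1}).ncard = m - 1 := by
    rw [Set.ncard_diff_singleton_of_mem (zpowers y).one_mem, ncard_zpowers, hym]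
  refine (Set.eq_of_subset_of_ncard_le hsub ?_ (Set.toFinite _)).symm
  rw [hcard1, contSet_ncard_of_prime_order hm hdeg hp hz]

lemma cyclic_of_ppow_case {m p a : ℕ} (hp : p.Prime) (ha : 2 ≤ a) (hma : m = p ^ a)
    (hdeg : ∀ x : G, x ≠ 1 → (nbhd x).ncard = m - 2)
    (hdvd : ∀ x : G, orderOf x ∣ m)
    (hmaxord : ∀ y : G, IsMaxCyclicGen y → y ≠ 1 → orderOf y = m)
    {g : G} (hg1 : g ≠ 1) :
    IsCyclic G ∧ Nat.card G = m := by
  haveI : Fact p.Prime := ⟨hp⟩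
  haveI : Nontrivial G := ⟨⟨g, 1, hg1⟩⟩
  have hm : 2 ≤ m := by
    rw [hma]
    calc 2 ≤ p := hp.two_le
      _ = p ^ 1 := (pow_one p).symm
      _ ≤ p ^ a := Nat.pow_le_pow_right hp.pos (by omega)
  -- G is a p-group
  have hpg : IsPGroup p G := by
    intro x
    exact ⟨a, orderOf_dvd_iff_pow_eq_one.mp (by rw [← hma]; exact hdvd x)⟩
  -- central element of order p
  haveI := IsPGroup.center_nontrivial hpg
  obtain ⟨c', hcne⟩ := exists_ne (1 : ↥(Subgroup.center G))
  obtain ⟨c, hcmem⟩ := c'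
  have hc1 : c ≠ 1 := fun h => hcne (Subtype.ext h)
  obtain ⟨b, hba, hb⟩ := (Nat.dvd_prime_pow hp).mp (hma ▸ hdvd c)
  have hb1 : 1 ≤ b := by
    rcases Nat.eq_zero_or_pos b with rfl | h
    · rw [pow_zero] at hb
      exact absurd (orderOf_eq_one_iff.mp hb) hc1
    · exact h
  set z₀ := c ^ (p ^ (b - 1)) with hz₀
  have hoz₀ : orderOf z₀ = p := by
    rw [hz₀, orderOf_pow, hb, Nat.gcd_eq_right (pow_dvd_pow p (Nat.sub_le b 1)),
      Nat.pow_div (Nat.sub_le b 1) hp.pos, show b - (b - 1) = 1 by omega, pow_one]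
  have hz₀c : z₀ ∈ Subgroup.center G := pow_mem hcmem _
  have hz₀1 : z₀ ≠ 1 := by
    intro h
    rw [h, orderOf_one] at hoz₀
    exact hp.one_lt.ne' hoz₀.symm
  obtain ⟨y₁, hzy₁, hy₁max⟩ := exists_maxgen z₀
  have hy₁1 : y₁ ≠ 1 := by
    rintro rfl
    rw [zpowers_one_eq_bot, Subgroup.mem_bot] at hzy₁
    exact hz₀1 hzy₁
  have hy₁m : orderOf y₁ = m := hmaxord y₁ hy₁max hy₁1
  have hall : ∀ w : G, w ∈ zpowers y₁ := by
    intro w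
    rcases eq_or_ne w 1 with rfl | hw1
    · exact (zpowers y₁).one_mem
    obtain ⟨y₂, hwy₂, hy₂max⟩ := exists_maxgen w
    have hy₂1 : y₂ ≠ 1 := by
      rintro rfl
      rw [zpowers_one_eq_bot, Subgroup.mem_bot] at hwy₂
      exact hw1 hwy₂
    have hy₂m : orderOf y₂ = m := hmaxord y₂ hy₂max hy₂1
    -- u = z₀ * y₂ has order p ^ a
    set u := z₀ * y₂ with hu
    have hcomm : Commute z₀ y₂ := (Subgroup.mem_center_iff.mp hz₀c y₂).symm
    have hupow : u ^ (p ^ (a - 1)) = y₂ ^ (p ^ (a - 1)) := by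
      rw [hu, hcomm.mul_pow]
      have : z₀ ^ (p ^ (a - 1)) = 1 := by
        apply orderOf_dvd_iff_pow_eq_one.mp
        rw [hoz₀]
        exact dvd_pow_self p (by omega)
      rw [this, one_mul]
    have hy₂pow_ne : y₂ ^ (p ^ (a - 1)) ≠ 1 := by
      intro h
      have := orderOf_dvd_iff_pow_eq_one.mpr h
      rw [hy₂m, hma] at this
      have := Nat.le_of_dvd (Nat.pow_pos hp.pos) this
      have h2 := Nat.pow_lt_pow_right hp.one_lt (show a - 1 < a by omega)
      omega
    -- z' of order p inside zpowers y₂ and zpowers u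
    set z' := y₂ ^ (p ^ (a - 1)) with hz'
    have hoz' : orderOf z' = p := by
      rw [hz', orderOf_pow, hy₂m, hma, Nat.gcd_eq_right (pow_dvd_pow p (Nat.sub_le a 1)),
        Nat.pow_div (Nat.sub_le a 1) hp.pos, show a - (a - 1) = 1 by omega, pow_one]
    have hz'u : z' ∈ zpowers u := by
      rw [← hupow]
      exact pow_mem (mem_zpowers u) _
    -- u ∈ contSet z' = zpowers y₂ \ {1}
    have hu1 : u ≠ 1 := by
      intro h
      rw [h, one_pow] at hupow
      exact hy₂pow_ne hupow.symm
    have hcont : contSet z' = ((zpowers y₂ : Subgroup G) : Set G) \ {1} :=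
      contSet_eq_maxgen hm hdeg hdvd hp hma hp hoz' hy₂max hy₂m (pow_mem (mem_zpowers y₂) _)
    have humem : u ∈ ((zpowers y₂ : Subgroup G) : Set G) \ {1} := by
      rw [← hcont]
      exact hz'u
    have huy₂ : u ∈ zpowers y₂ := humem.1
    have hz₀y₂ : z₀ ∈ zpowers y₂ := by
      have : z₀ = u * y₂⁻¹ := by rw [hu]; group
      rw [this]
      exact mul_mem huy₂ (inv_mem (mem_zpowers y₂))
    -- so contSet z₀ determined by both y₁ and y₂
    have e1 : contSet z₀ = ((zpowers y₁ : Subgroup G) : Set G) \ {1} :=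
      contSet_eq_maxgen hm hdeg hdvd hp hma hp hoz₀ hy₁max hy₁m hzy₁
    have e2 : contSet z₀ = ((zpowers y₂ : Subgroup G) : Set G) \ {1} :=
      contSet_eq_maxgen hm hdeg hdvd hp hma hp hoz₀ hy₂max hy₂m hz₀y₂
    have : ((zpowers y₁ : Subgroup G) : Set G) = ((zpowers y₂ : Subgroup G) : Set G) := by
      have h12 := e1.symm.trans e2
      ext v
      rcases eq_or_ne v 1 with rfl | hv1
      · simp [(zpowers y₁).one_mem, (zpowers y₂).one_mem]
      · constructor
        · intro hv
          have hm2 : v ∈ ((zpowers y₂ : Subgroup G) : Set G) \ {1} := by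
            rw [← h12]; exact ⟨hv, hv1⟩
          exact hm2.1
        · intro hv
          have hm2 : v ∈ ((zpowers y₁ : Subgroup G) : Set G) \ {1} := by
            rw [h12]; exact ⟨hv, hv1⟩
          exact hm2.1
    rw [SetLike.ext'_iff.mpr this]
    exact hwy₂
  constructor
  · exact ⟨⟨y₁, hall⟩⟩
  · have : zpowers y₁ = ⊤ := by
      rw [Subgroup.eq_top_iff']
      exact hall
    rw [← hy₁m, ← Nat.card_zpowers, this]
    exact Subgroup.card_top.symm
end Forward

section L8
variable {G : Type*} [Group G] [Fintype G]

lemma coprime_of_modeq_one {f k : ℕ} (h : k ≡ 1 [MOD f]) : Nat.Coprime f k := by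
  have h2 := Nat.ModEq.gcd_eq h
  simp only [Nat.gcd_one_left] at h2
  rwa [Nat.Coprime, Nat.gcd_comm]

lemma commute_of_mem_zpowers {y a b : G} (ha : a ∈ zpowers y) (hb : b ∈ zpowers y) :
    Commute a b := by
  obtain ⟨i, rfl⟩ := ha
  obtain ⟨j, rfl⟩ := hb
  exact Commute.zpow_zpow_self y i j

lemma subgroup_eq_of_le_of_card_le {H K : Subgroup G} (h : H ≤ K)
    (hc : Nat.card ↥K ≤ Nat.card ↥H) : H = K := by
  apply SetLike.ext'
  apply Set.eq_of_subset_of_ncard_le (SetLike.coe_subset_coe.mpr h) _ (Set.toFinite _)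
  rw [← Nat.card_coe_set_eq, ← Nat.card_coe_set_eq]
  exact hc

/-- The key "recovery" power: if `u` has order `p^a`, `v` commutes with `u` and has
order coprime to `p`, then `u` is a power of `u * v`. -/
lemma recover_p_part {p a : ℕ} (hp : p.Prime) {u v : G} (hu : orderOf u = p ^ a)
    (hcomm : Commute u v) (hv : ¬ p ∣ orderOf v) :
    ∃ k : ℕ, (u * v) ^ k = u ∧ k ≡ 1 [MOD p ^ a] ∧ k ≡ 0 [MOD orderOf v] := by
  have hcop : (p ^ a).Coprime (orderOf v) :=
    Nat.Coprime.pow_left _ (hp.coprime_iff_not_dvd.mpr hv)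
  obtain ⟨k, hk1, hk2⟩ := Nat.chineseRemainder hcop 1 0
  refine ⟨k, ?_, hk1, hk2⟩
  rw [hcomm.mul_pow]
  have hvk : v ^ k = 1 :=
    orderOf_dvd_iff_pow_eq_one.mp ((Nat.modEq_zero_iff_dvd.mp hk2))
  have huk : u ^ k = u ^ 1 := pow_eq_pow_iff_modEq.mpr (by rw [hu]; exact hk1)
  rw [hvk, huk, pow_one, mul_one]

lemma orderOf_pow_eq_ordCompl {y : G} {pa f : ℕ} (hn : orderOf y = pa * f)
    {k : ℕ} (hk1 : k ≡ 1 [MOD pa]) (hk2 : k ≡ 0 [MOD f]) : orderOf (y ^ k) = pa := by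
  have hf : f ∣ k := Nat.modEq_zero_iff_dvd.mp hk2
  obtain ⟨k₁, rfl⟩ := hf
  have hfpos : 0 < f := by
    rcases Nat.eq_zero_or_pos f with rfl | h
    · have := orderOf_pos y
      rw [hn] at this
      omega
    · exact h
  have hcop2 : Nat.Coprime pa k₁ := by
    have h1 : Nat.Coprime pa (f * k₁) := coprime_of_modeq_one hk1
    exact Nat.Coprime.coprime_dvd_right (Dvd.intro_left f rfl) h1
  rw [orderOf_pow, hn]
  have hgcd : Nat.gcd (pa * f) (f * k₁) = f := by
    rw [Nat.mul_comm pa f, Nat.gcd_mul_left, hcop2.gcd_eq_one, Nat.mul_one]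
  rw [hgcd, Nat.mul_div_assoc pa (dvd_refl f), Nat.div_self hfpos, Nat.mul_one]

lemma T_product_card {p a s m : ℕ} (hp : p.Prime) (ha : 1 ≤ a) (hm : m = p ^ a * s)
    (hps : ¬ p ∣ s) (hdvd : ∀ y : G, orderOf y ∣ m)
    {x : G} (hox : orderOf x = p ^ a) :
    (contSet x).ncard
      = {u : G | u ∈ zpowers x ∧ orderOf u = p ^ a}.ncard
        * {v : G | Commute x v ∧ ¬ p ∣ orderOf v}.ncard := by
  classical
  set Gens := {u : G | u ∈ zpowers x ∧ orderOf u = p ^ a} with hGens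
  set V := {v : G | Commute x v ∧ ¬ p ∣ orderOf v} with hV
  have hrec : ∀ u v : G, u ∈ Gens → v ∈ V →
      ∃ k : ℕ, (u * v) ^ k = u ∧ k ≡ 1 [MOD p ^ a] ∧ k ≡ 0 [MOD orderOf v] := by
    intro u v hu hv
    obtain ⟨i, rfl⟩ := hu.1
    exact recover_p_part hp hu.2 ((hv.1).zpow_left i) hv.2
  have himg : (fun q : G × G => q.1 * q.2) '' (Gens ×ˢ V) = contSet x := by
    apply Set.Subset.antisymm
    · rintro w ⟨⟨u, v⟩, hmem, rfl⟩
      obtain ⟨hu, hv⟩ := Set.mem_prod.mp hmem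
      obtain ⟨k, hk, -, -⟩ := hrec u v hu hv
      have hzu : zpowers u = zpowers x :=
        zpowers_eq_of_mem_of_orderOf_eq hu.1 (mem_zpowers x) (hu.2.trans hox.symm)
      have hxu : x ∈ zpowers u := by rw [hzu]; exact mem_zpowers x
      have hule : zpowers u ≤ zpowers (u * v) :=
        zpowers_le.mpr (mem_zpowers_iff.mpr ⟨(k : ℤ), by rw [zpow_natCast]; exact hk⟩)
      exact hule hxu
    · intro y hy
      have hdn : orderOf x ∣ orderOf y := orderOf_dvd_of_mem_zpowers hy
      set n := orderOf y with hn
      set f := n / p ^ (n.factorization p) with hf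
      have hnm : n ∣ m := hdvd y
      have hn0 : n ≠ 0 := (orderOf_pos y).ne'
      have hnpf : n = p ^ (n.factorization p) * f := (Nat.ordProj_mul_ordCompl_eq_self n p).symm
      have hpf : ¬ p ∣ f := Nat.not_dvd_ordCompl hp hn0
      have hfac : n.factorization p = a := by
        have h1 : p ^ a ∣ n := hox ▸ hdn
        have hcop1 : Nat.Coprime (p ^ a) f := Nat.Coprime.pow_left _ (hp.coprime_iff_not_dvd.mpr hpf)
        have h2 : p ^ a ∣ p ^ (n.factorization p) := by
          refine hcop1.dvd_of_dvd_mul_right ?_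
          rw [← hnpf]
          exact h1
        have h3 : p ^ (n.factorization p) ∣ p ^ a := by
          have hcop2 : Nat.Coprime (p ^ (n.factorization p)) s :=
            Nat.Coprime.pow_left _ (hp.coprime_iff_not_dvd.mpr hps)
          refine hcop2.dvd_of_dvd_mul_right ?_
          rw [← hm]
          exact dvd_trans (Nat.ordProj_dvd n p) hnm
        have h4 := Nat.le_of_dvd (Nat.pow_pos hp.pos) h2
        have h5 := Nat.le_of_dvd (Nat.pow_pos hp.pos) h3
        exact Nat.pow_right_injective hp.two_le (le_antisymm h5 h4)
      rw [hfac] at hnpf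
      have hcop : Nat.Coprime (p ^ a) f := Nat.Coprime.pow_left _ (hp.coprime_iff_not_dvd.mpr hpf)
      obtain ⟨k, hk1, hk2⟩ := Nat.chineseRemainder hcop 1 0
      obtain ⟨k', hk'1, hk'2⟩ := Nat.chineseRemainder hcop 0 1
      set u := y ^ k with hu
      set v := y ^ k' with hv'
      have hou : orderOf u = p ^ a := orderOf_pow_eq_ordCompl hnpf hk1 hk2
      have hov : orderOf v = f :=
        orderOf_pow_eq_ordCompl (by rw [← hn, hnpf, Nat.mul_comm]) hk'2 hk'1
      have huv : u * v = y := by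
        rw [hu, hv', ← pow_add]
        have : y ^ (k + k') = y ^ 1 := by
          apply pow_eq_pow_iff_modEq.mpr
          rw [← hn, hnpf]
          refine (Nat.modEq_and_modEq_iff_modEq_mul hcop).mp ⟨?_, ?_⟩
          · simpa using Nat.ModEq.add hk1 hk'1
          · simpa using Nat.ModEq.add hk2 hk'2
        rw [this, pow_one]
      have huG : u ∈ Gens := by
        have : zpowers u = zpowers x :=
          zpowers_eq_of_mem_of_orderOf_eq (pow_mem (mem_zpowers y) k) hy
            (by rw [hou, hox])
        exact ⟨by rw [← this]; exact mem_zpowers u, hou⟩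
      have hvV : v ∈ V := by
        refine ⟨commute_of_mem_zpowers hy (pow_mem (mem_zpowers y) k'), ?_⟩
        rw [hov]
        exact hpf
      exact ⟨(u, v), Set.mem_prod.mpr ⟨huG, hvV⟩, huv⟩
  have hinj : Set.InjOn (fun q : G × G => q.1 * q.2) (Gens ×ˢ V) := by
    rintro ⟨u, v⟩ hmem ⟨u', v'⟩ hmem' heq
    obtain ⟨hu, hv⟩ := Set.mem_prod.mp hmem
    obtain ⟨hu', hv'⟩ := Set.mem_prod.mp hmem'
    simp only at heq
    dsimp only at hu hv hu' hv'
    have hcomm : Commute u v := by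
      obtain ⟨i, rfl⟩ := hu.1
      exact (hv.1).zpow_left i
    have hcomm' : Commute u' v' := by
      obtain ⟨i, rfl⟩ := hu'.1
      exact (hv'.1).zpow_left i
    have hcop : (orderOf u).Coprime (orderOf v) := by
      rw [hu.2]
      exact Nat.Coprime.pow_left _ (hp.coprime_iff_not_dvd.mpr hv.2)
    have hcop' : (orderOf u').Coprime (orderOf v') := by
      rw [hu'.2]
      exact Nat.Coprime.pow_left _ (hp.coprime_iff_not_dvd.mpr hv'.2)
    have hords : p ^ a * orderOf v = p ^ a * orderOf v' := by
      have e1 := hcomm.orderOf_mul_eq_mul_orderOf_of_coprime hcop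
      have e2 := hcomm'.orderOf_mul_eq_mul_orderOf_of_coprime hcop'
      rw [hu.2] at e1
      rw [hu'.2] at e2
      rw [← e1, ← e2, heq]
    have hveq : orderOf v = orderOf v' :=
      Nat.eq_of_mul_eq_mul_left (Nat.pow_pos hp.pos) hords
    obtain ⟨k, hk, hk1, hk2⟩ := recover_p_part hp hu.2 hcomm hv.2
    have hk' : (u' * v') ^ k = u' := by
      rw [hcomm'.mul_pow]
      have hvk : v' ^ k = 1 := by
        apply orderOf_dvd_iff_pow_eq_one.mp
        rw [← hveq]
        exact Nat.modEq_zero_iff_dvd.mp hk2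
      have huk : u' ^ k = u' ^ 1 := pow_eq_pow_iff_modEq.mpr (by rw [hu'.2]; exact hk1)
      rw [hvk, huk, pow_one, mul_one]
    have huu : u = u' := by rw [← hk, heq, hk']
    have hvv : v = v' := by
      subst huu
      exact mul_left_cancel heq
    rw [huu, hvv]
  rw [← himg, Set.ncard_image_of_injOn hinj, Set.ncard_eq_toFinset_card',
    Set.toFinset_prod, Finset.card_product,
    ← Set.ncard_eq_toFinset_card', ← Set.ncard_eq_toFinset_card']

lemma orderOf_pow_coprime_part {y : G} {M pa s : ℕ} (hy : orderOf y = M) (hM : M = pa * s)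
    (hpa : 0 < pa) (hs : 0 < s) : orderOf (y ^ pa) = s := by
  rw [orderOf_pow, hy, hM, Nat.gcd_eq_right ⟨s, rfl⟩, Nat.mul_comm,
    Nat.mul_div_assoc s (dvd_refl pa), Nat.div_self hpa, Nat.mul_one]

lemma mem_coprime_subgroup {y w : G} {p a s m : ℕ} (hp : p.Prime)
    (hy : orderOf y = m) (hm : m = p ^ a * s) (hs : 0 < s)
    (hw : w ∈ zpowers y) (hpw : ¬ p ∣ orderOf w) : w ∈ zpowers (y ^ (p ^ a)) := by
  have hoe : orderOf (y ^ (p ^ a)) = s :=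
    orderOf_pow_coprime_part hy hm (Nat.pow_pos hp.pos) hs
  apply mem_zpowers_of_mem_of_pow (pow_mem (mem_zpowers y) _) hw
  rw [hoe]
  apply orderOf_dvd_iff_pow_eq_one.mp
  have hdvd : orderOf w ∣ p ^ a * s := by
    rw [← hm, ← hy]
    exact orderOf_dvd_of_mem_zpowers hw
  have hcop : Nat.Coprime (orderOf w) (p ^ a) :=
    Nat.Coprime.pow_right _ (Nat.coprime_comm.mp (hp.coprime_iff_not_dvd.mpr hpw))
  exact hcop.dvd_of_dvd_mul_left hdvd

lemma false_of_not_ppow {m : ℕ}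
    (hdeg : ∀ x : G, x ≠ 1 → (nbhd x).ncard = m - 2)
    (hdvd : ∀ x : G, orderOf x ∣ m)
    (hmaxord : ∀ y : G, IsMaxCyclicGen y → y ≠ 1 → orderOf y = m)
    {g : G} (hgmax : IsMaxCyclicGen g) (hgm : orderOf g = m)
    {p : ℕ} (hp : p.Prime) (hp3 : 3 ≤ p) (hpm : p ∣ m)
    (hs2 : 2 ≤ m / p ^ (m.factorization p)) : False := by
  classical
  set a := m.factorization p with haDef
  set s := m / p ^ a with hsDef
  have hm0 : m ≠ 0 := by rw [← hgm]; exact (orderOf_pos g).ne'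
  have hm : m = p ^ a * s := (Nat.ordProj_mul_ordCompl_eq_self m p).symm
  have hps : ¬ p ∣ s := Nat.not_dvd_ordCompl hp hm0
  have ha : 1 ≤ a := hp.factorization_pos_of_dvd hm0 hpm
  have hpapos : 0 < p ^ a := Nat.pow_pos hp.pos
  have hpa2 : 2 ≤ p ^ a := by
    calc 2 ≤ p := hp.two_le
      _ = p ^ 1 := (pow_one p).symm
      _ ≤ p ^ a := Nat.pow_le_pow_right hp.pos ha
  set x := g ^ s with hxDef
  have hox : orderOf x = p ^ a := by
    rw [hxDef, orderOf_pow, hgm, Nat.gcd_eq_right ⟨p ^ a, by rw [hm, Nat.mul_comm]⟩, hm,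
      Nat.mul_div_assoc _ (dvd_refl s), Nat.div_self (by omega), Nat.mul_one]
  have hx1 : x ≠ 1 := by
    intro h
    rw [h, orderOf_one] at hox
    omega
  set Gens := {u : G | u ∈ zpowers x ∧ orderOf u = p ^ a} with hGensDef
  set V := {v : G | Commute x v ∧ ¬ p ∣ orderOf v} with hVDef
  set t := Gens.ncard with htDef
  set Vc := V.ncard with hVcDef
  -- the master counting equation
  have hinter : (((zpowers x : Subgroup G) : Set G)) ∩ contSet x = Gens := by
    ext u
    constructor
    · rintro ⟨hu1, hu2⟩
      have he : zpowers u = zpowers x :=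
        le_antisymm (zpowers_le.mpr hu1) (zpowers_le.mpr hu2)
      refine ⟨hu1, ?_⟩
      rw [← hox, ← Nat.card_zpowers, ← Nat.card_zpowers, he]
    · rintro ⟨hu1, hu2⟩
      have he : zpowers u = zpowers x :=
        zpowers_eq_of_mem_of_orderOf_eq hu1 (mem_zpowers x) (by rw [hu2, hox])
      have hxu : x ∈ zpowers u := by rw [he]; exact mem_zpowers x
      exact ⟨hu1, hxu⟩
  have hE : m + t = p ^ a + t * Vc := by
    have hsub : ({1, x} : Set G) ⊆ ((zpowers x : Subgroup G) : Set G) ∪ contSet x := by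
      rintro w hw
      rcases hw with rfl | hw
      · exact Or.inl (zpowers x).one_mem
      · rw [Set.mem_singleton_iff] at hw
        subst hw
        exact Or.inl (mem_zpowers _)
    have hU2 : 2 ≤ (((zpowers x : Subgroup G) : Set G) ∪ contSet x).ncard := by
      have := Set.ncard_le_ncard hsub (Set.toFinite _)
      rwa [Set.ncard_pair (Ne.symm hx1)] at this
    have hdx := hdeg x hx1
    rw [nbhd_eq, Set.ncard_diff hsub, Set.ncard_pair (Ne.symm hx1)] at hdx
    have hm2 : 2 ≤ m := by
      calc 2 ≤ p ^ a := hpa2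
        _ ≤ p ^ a * s := Nat.le_mul_of_pos_right _ (by omega)
        _ = m := hm.symm
    have hUeq : (((zpowers x : Subgroup G) : Set G) ∪ contSet x).ncard = m := by omega
    have hIE := Set.ncard_union_add_ncard_inter ((zpowers x : Subgroup G) : Set G) (contSet x)
      (Set.toFinite _) (Set.toFinite _)
    rw [hUeq, hinter, ncard_zpowers, hox] at hIE
    rw [T_product_card hp ha hm hps hdvd hox] at hIE
    exact hIE
  -- bounds on t
  have hGsub : Gens ⊆ ((zpowers x : Subgroup G) : Set G) := fun u hu => hu.1
  have htle : t + 1 ≤ p ^ a := by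
    have hGsub1 : Gens ⊆ ((zpowers x : Subgroup G) : Set G) \ {1} := by
      intro u hu
      refine ⟨hu.1, ?_⟩
      intro h1
      rw [Set.mem_singleton_iff] at h1
      subst h1
      have h2 := hu.2
      rw [orderOf_one] at h2
      omega
    have := Set.ncard_le_ncard hGsub1 (Set.toFinite _)
    rw [Set.ncard_diff_singleton_of_mem (zpowers x).one_mem,
      ncard_zpowers, hox] at this
    omega
  have htge : p ^ a ≤ t + p ^ (a - 1) := by
    have hWsub : ((zpowers x : Subgroup G) : Set G) \ Gens
        ⊆ {w : G | w ∈ zpowers x ∧ w ^ (p ^ (a - 1)) = 1} := by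
      rintro w ⟨hw1, hw2⟩
      refine ⟨hw1, ?_⟩
      have hwd : orderOf w ∣ p ^ a := by
        rw [← hox]
        exact orderOf_dvd_of_mem_zpowers hw1
      obtain ⟨c, hca, hc⟩ := (Nat.dvd_prime_pow hp).mp hwd
      have hcne : orderOf w ≠ p ^ a := fun h => hw2 ⟨hw1, h⟩
      have hclt : c ≤ a - 1 := by
        rcases Nat.lt_or_ge c a with h | h
        · omega
        · exfalso; apply hcne; rw [hc]; congr 1; omega
      apply orderOf_dvd_iff_pow_eq_one.mp
      rw [hc]
      exact pow_dvd_pow p hclt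
    have h1 := Set.ncard_le_ncard hWsub (Set.toFinite _)
    have h2 := pow_card_sol_le x (p ^ (a - 1)) (Nat.pow_pos hp.pos)
    have h3 : (((zpowers x : Subgroup G) : Set G) \ Gens).ncard = p ^ a - t := by
      rw [Set.ncard_diff hGsub, ncard_zpowers, hox]
    omega
  -- the x*v ∈ contSet x fact
  have hxvT : ∀ v : G, v ∈ V → x * v ∈ contSet x := by
    intro v hv
    obtain ⟨k, hk, -, -⟩ := recover_p_part hp hox hv.1 hv.2
    exact (zpowers_le.mpr (mem_zpowers_iff.mpr ⟨(k : ℤ), by rw [zpow_natCast]; exact hk⟩))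
      (mem_zpowers x)
  have hxg : x ∈ zpowers g := pow_mem (mem_zpowers g) s
  by_cases hT : contSet x ⊆ ((zpowers g : Subgroup G) : Set G)
  · -- Case A : everything containing x lies in zpowers g
    have hVsub : V ⊆ ((zpowers (g ^ (p ^ a)) : Subgroup G) : Set G) := by
      intro v hv
      have hxvg : x * v ∈ zpowers g := hT (hxvT v hv)
      have hvg : v ∈ zpowers g := by
        have : v = x⁻¹ * (x * v) := by group
        rw [this]
        exact mul_mem (inv_mem hxg) hxvg
      exact mem_coprime_subgroup hp hgm hm (by omega) hvg hv.2
    have hVle : Vc ≤ s := by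
      have := Set.ncard_le_ncard hVsub (Set.toFinite _)
      rwa [ncard_zpowers, orderOf_pow_coprime_part hgm hm hpapos (by omega)] at this
    -- m + t = p^a + t*Vc ≤ p^a + t*s with m = p^a s, t ≤ p^a - 1, s ≥ 2 : contradiction
    have h1 : p ^ a * s + t ≤ p ^ a + t * s := by
      rw [← hm]
      calc m + t = p ^ a + t * Vc := hE
        _ ≤ p ^ a + t * s := by
            have := Nat.mul_le_mul_left t hVle
            omega
    nlinarith [h1, htle, hs2, hpa2]
  · -- Case B : some y₀ containing x outside zpowers g
    rw [Set.not_subset] at hT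
    obtain ⟨y₀, hy₀T, hy₀g⟩ := hT
    have hy₀1 : y₀ ≠ 1 := by
      rintro rfl
      have h' : x ∈ zpowers (1 : G) := hy₀T
      rw [zpowers_one_eq_bot, Subgroup.mem_bot] at h'
      exact hx1 h'
    obtain ⟨y₁, hy₀y₁, hy₁max⟩ := exists_maxgen y₀
    have hy₁1 : y₁ ≠ 1 := by
      rintro rfl
      rw [zpowers_one_eq_bot, Subgroup.mem_bot] at hy₀y₁
      exact hy₀1 hy₀y₁
    have hy₁m : orderOf y₁ = m := hmaxord y₁ hy₁max hy₁1
    have hxy₁ : x ∈ zpowers y₁ := (zpowers_le.mpr hy₀y₁) hy₀T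
    set e₀ := g ^ (p ^ a) with he₀
    set e₁ := y₁ ^ (p ^ a) with he₁
    have hoe₀ : orderOf e₀ = s := orderOf_pow_coprime_part hgm hm hpapos (by omega)
    have hoe₁ : orderOf e₁ = s := orderOf_pow_coprime_part hy₁m hm hpapos (by omega)
    have hSV : ∀ (y : G), orderOf y = m → x ∈ zpowers y →
        ((zpowers (y ^ (p ^ a)) : Subgroup G) : Set G) ⊆ V := by
      intro y hym hxy w hw
      have hwy : w ∈ zpowers y := (zpowers_le.mpr (pow_mem (mem_zpowers y) _)) hw
      constructor
      · exact commute_of_mem_zpowers hxy hwy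
      · intro hpw
        apply hps
        have h1 : orderOf w ∣ s := by
          rw [← orderOf_pow_coprime_part hym hm hpapos (by omega)]
          exact orderOf_dvd_of_mem_zpowers hw
        exact dvd_trans hpw h1
    -- join decomposition : zpowers x ⊔ zpowers (y ^ p^a) = zpowers y
    have hjoin : ∀ (y : G), orderOf y = m → x ∈ zpowers y →
        zpowers x ⊔ zpowers (y ^ (p ^ a)) = zpowers y := by
      intro y hym hxy
      have hle : zpowers x ⊔ zpowers (y ^ (p ^ a)) ≤ zpowers y :=
        sup_le (zpowers_le.mpr hxy) (zpowers_le.mpr (pow_mem (mem_zpowers y) _))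
      apply subgroup_eq_of_le_of_card_le hle
      have h1 : p ^ a ∣ Nat.card ↥(zpowers x ⊔ zpowers (y ^ (p ^ a))) := by
        rw [← hox, ← Nat.card_zpowers]
        exact Subgroup.card_dvd_of_le le_sup_left
      have h2 : s ∣ Nat.card ↥(zpowers x ⊔ zpowers (y ^ (p ^ a))) := by
        rw [← orderOf_pow_coprime_part hym hm hpapos (by omega), ← Nat.card_zpowers]
        exact Subgroup.card_dvd_of_le le_sup_right
      have hcop : Nat.Coprime (p ^ a) s := Nat.Coprime.pow_left _ (hp.coprime_iff_not_dvd.mpr hps)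
      have h3 : p ^ a * s ∣ Nat.card ↥(zpowers x ⊔ zpowers (y ^ (p ^ a))) :=
        hcop.mul_dvd_of_dvd_of_dvd h1 h2
      rw [Nat.card_zpowers, hym, hm]
      exact Nat.le_of_dvd Nat.card_pos h3
    have hSne : zpowers e₀ ≠ zpowers e₁ := by
      intro heq
      apply hy₀g
      have : zpowers g = zpowers y₁ := by
        rw [← hjoin g hgm hxg, ← hjoin y₁ hy₁m hxy₁, ← he₀, ← he₁, heq]
      rw [SetLike.ext'_iff] at this
      rw [this]
      exact hy₀y₁
    set H := zpowers e₀ ⊓ zpowers e₁ with hH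
    have hHd : Nat.card ↥H ∣ s := by
      rw [← hoe₀, ← Nat.card_zpowers]
      exact Subgroup.card_dvd_of_le inf_le_left
    have hHne : Nat.card ↥H ≠ s := by
      intro hcard
      apply hSne
      have h0 : H = zpowers e₀ := subgroup_eq_of_le_of_card_le inf_le_left
        (by rw [Nat.card_zpowers, hoe₀, hcard])
      have h1 : H = zpowers e₁ := subgroup_eq_of_le_of_card_le inf_le_right
        (by rw [Nat.card_zpowers, hoe₁, hcard])
      rw [← h0, ← h1]
    have hH2 : 2 * Nat.card ↥H ≤ s := by
      obtain ⟨c, hc⟩ := hHd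
      have hc2 : 2 ≤ c := by
        rcases Nat.lt_or_ge c 2 with h | h
        · exfalso
          have hc01 : c = 0 ∨ c = 1 := by omega
          rcases hc01 with rfl | rfl
          · rw [Nat.mul_zero] at hc; omega
          · rw [Nat.mul_one] at hc; exact hHne hc.symm
        · exact h
      calc 2 * Nat.card ↥H ≤ Nat.card ↥H * c := by
            have := Nat.card_pos (α := ↥H)
            nlinarith
        _ = s := hc.symm
    have hVge : 3 * s ≤ 2 * Vc := by
      have hU := Set.ncard_union_add_ncard_inter
        ((zpowers e₀ : Subgroup G) : Set G) ((zpowers e₁ : Subgroup G) : Set G)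
        (Set.toFinite _) (Set.toFinite _)
      have hIcard : (((zpowers e₀ : Subgroup G) : Set G) ∩ ((zpowers e₁ : Subgroup G) : Set G)).ncard
          = Nat.card ↥H := by
        have hset : ((zpowers e₀ : Subgroup G) : Set G) ∩ ((zpowers e₁ : Subgroup G) : Set G)
            = (H : Set G) := by
          rw [hH, Subgroup.coe_inf]
        rw [hset, ← Nat.card_coe_set_eq]
        rfl
      have hUsub : ((zpowers e₀ : Subgroup G) : Set G) ∪ ((zpowers e₁ : Subgroup G) : Set G) ⊆ V :=
        Set.union_subset (hSV g hgm hxg) (hSV y₁ hy₁m hxy₁)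
      have hUle : (((zpowers e₀ : Subgroup G) : Set G) ∪ ((zpowers e₁ : Subgroup G) : Set G)).ncard ≤ Vc :=
        Set.ncard_le_ncard hUsub (Set.toFinite _)
      rw [hIcard, ncard_zpowers, ncard_zpowers, hoe₀, hoe₁] at hU
      omega
    -- final arithmetic contradiction
    have hpa_split : p ^ a = p * p ^ (a - 1) := by
      rw [← pow_succ']
      congr 1
      omega
    set A := p ^ (a - 1) with hA
    have hA1 : 1 ≤ A := Nat.pow_pos hp.pos
    rw [hpa_split] at hE htle htge
    rw [hm, hpa_split] at hE
    -- hE : p*A*s + t = p*A + t*Vc, htle : t + 1 ≤ p*A, htge : p*A ≤ t + A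
    -- hVge : 3s ≤ 2 Vc, hs2 : 2 ≤ s, hp3 : 3 ≤ p
    have h1 : t * (3 * s) ≤ t * (2 * Vc) := Nat.mul_le_mul_left t hVge
    have h2 : (p * A) * (3 * s) ≤ (t + A) * (3 * s) := Nat.mul_le_mul_right _ htge
    have h3 : 3 * (A * s) ≤ p * (A * s) := Nat.mul_le_mul_right _ hp3
    linarith [hE, h1, h2, h3, htle]

end L8

end Aux

/-- The proper power graph `𝒢*(G)` (the power graph with the identity removed) of a
finite group is regular iff `G` is cyclic of prime power order or of prime exponent. -/
theorem stmt_9 (G : Type*) [Group G] [Fintype G] :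
    (∀ u v : ↥{g : G | g ≠ 1},
        gDegree ((powerGraph G).induce {g : G | g ≠ 1}) u =
          gDegree ((powerGraph G).induce {g : G | g ≠ 1}) v) ↔
      ((IsCyclic G ∧ ∃ p k : ℕ, p.Prime ∧ Nat.card G = p ^ k) ∨
        ∃ p : ℕ, p.Prime ∧ ∀ x : G, x ≠ 1 → orderOf x = p) := by
  constructor
  · intro hreg
    have hreg' : ∀ x y : G, x ≠ 1 → y ≠ 1 → (nbhd x).ncard = (nbhd y).ncard := by
      intro x y hx hy
      have := hreg ⟨x, hx⟩ ⟨y, hy⟩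
      rwa [deg_eq, deg_eq] at this
    by_cases htriv : ∀ x : G, x = 1
    · left
      refine ⟨⟨⟨1, fun x => by rw [htriv x]; exact (zpowers (1:G)).one_mem⟩⟩, 2, 0,
        Nat.prime_two, ?_⟩
      rw [pow_zero, Nat.card_eq_fintype_card]
      exact Fintype.card_eq_one_iff.mpr ⟨1, htriv⟩
    push_neg at htriv
    obtain ⟨x₀, hx₀⟩ := htriv
    obtain ⟨g, hx₀g, hgmax⟩ := exists_maxgen x₀
    have hg1 : g ≠ 1 := by
      rintro rfl
      rw [zpowers_one_eq_bot, Subgroup.mem_bot] at hx₀g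
      exact hx₀ hx₀g
    set m := orderOf g with hmDef
    have hord2 : ∀ y : G, y ≠ 1 → 2 ≤ orderOf y := by
      intro y hy
      have h1 := orderOf_pos y
      have h2 : orderOf y ≠ 1 := fun h => hy (orderOf_eq_one_iff.mp h)
      omega
    have hm2 : 2 ≤ m := hord2 g hg1
    have hmaxord : ∀ y : G, IsMaxCyclicGen y → y ≠ 1 → orderOf y = m := by
      intro y hy hy1
      have h1 := hreg' y g hy1 hg1
      rw [nbhd_maxgen hy hy1, nbhd_maxgen hgmax hg1] at h1
      have h2 := hord2 y hy1
      omega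
    have hdeg : ∀ x : G, x ≠ 1 → (nbhd x).ncard = m - 2 := fun x hx => by
      rw [hreg' x g hx hg1, nbhd_maxgen hgmax hg1]
    have hdvd : ∀ x : G, orderOf x ∣ m := by
      intro x
      rcases eq_or_ne x 1 with rfl | hx
      · simp
      obtain ⟨y, hxy, hymax⟩ := exists_maxgen x
      have hy1 : y ≠ 1 := by
        rintro rfl
        rw [zpowers_one_eq_bot, Subgroup.mem_bot] at hxy
        exact hx hxy
      rw [← hmaxord y hymax hy1]
      exact orderOf_dvd_of_mem_zpowers hxy
    by_cases hprime : m.Prime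
    · right
      refine ⟨m, hprime, fun x hx => ?_⟩
      rcases hprime.eq_one_or_self_of_dvd _ (hdvd x) with h | h
      · exact absurd (orderOf_eq_one_iff.mp h) hx
      · exact h
    by_cases hpp : IsPrimePow m
    · left
      obtain ⟨p, k, hpp', hk, hmk⟩ := hpp
      have hp : p.Prime := Nat.prime_iff.mpr hpp'
      have hk2 : 2 ≤ k := by
        rcases Nat.lt_or_ge k 2 with h | h
        · exfalso
          have hk1 : k = 1 := by omega
          rw [hk1, pow_one] at hmk
          exact hprime (hmk ▸ hp)
        · exact h
      obtain ⟨hc, hcard⟩ := cyclic_of_ppow_case hp hk2 hmk.symm hdeg hdvd hmaxord hg1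
      exact ⟨hc, p, k, hp, by rw [hcard, ← hmk]⟩
    · exfalso
      have hm0 : m ≠ 0 := by omega
      -- find an odd prime divisor of m
      set c := m / 2 ^ (m.factorization 2) with hcDef
      have hceq : m = 2 ^ (m.factorization 2) * c := (Nat.ordProj_mul_ordCompl_eq_self m 2).symm
      have hcodd : ¬ 2 ∣ c := Nat.not_dvd_ordCompl Nat.prime_two hm0
      have hcpos : 0 < c := Nat.ordCompl_pos 2 hm0
      have hc2 : 2 ≤ c := by
        rcases Nat.lt_or_ge c 2 with h | h
        · exfalso
          have hc1 : c = 1 := by omega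
          apply hpp
          refine ⟨2, m.factorization 2, Nat.prime_iff.mp Nat.prime_two, ?_, ?_⟩
          · have : 2 ∣ m := by
              rcases Nat.even_or_odd m with he | ho
              · exact he.two_dvd
              · exfalso
                -- m odd means factorization 2 = 0, so m = c = 1, contradiction with m ≥ 2
                have : m.factorization 2 = 0 := by
                  rw [Nat.factorization_eq_zero_iff]
                  right; left
                  intro h2
                  rw [Nat.odd_iff] at ho
                  omega
                rw [this, pow_zero, one_mul, hc1] at hceq
                omega
            exact (Nat.Prime.factorization_pos_of_dvd Nat.prime_two hm0 this)
          · rw [hc1, Nat.mul_one] at hceq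
            exact hceq.symm
        · exact h
      set p := c.minFac with hpDef
      have hp : p.Prime := Nat.minFac_prime (by omega)
      have hpc : p ∣ c := Nat.minFac_dvd c
      have hcm : c ∣ m := ⟨2 ^ (m.factorization 2), by rw [Nat.mul_comm c, ← hceq]⟩
      have hpm : p ∣ m := hpc.trans hcm
      have hp2 : p ≠ 2 := by
        intro h
        rw [← h] at hcodd
        exact hcodd hpc
      have hp3 : 3 ≤ p := by
        have := hp.two_le
        rcases Nat.lt_or_ge p 3 with h | h
        · interval_cases p
          · exact absurd rfl hp2
        · exact h
      have hs2 : 2 ≤ m / p ^ (m.factorization p) := by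
        have hspos : 0 < m / p ^ (m.factorization p) := Nat.ordCompl_pos p hm0
        rcases Nat.lt_or_ge (m / p ^ (m.factorization p)) 2 with h | h
        · exfalso
          apply hpp
          have hs1 : m / p ^ (m.factorization p) = 1 := by omega
          refine ⟨p, m.factorization p, Nat.prime_iff.mp hp, hp.factorization_pos_of_dvd hm0 hpm, ?_⟩
          have := (Nat.ordProj_mul_ordCompl_eq_self m p)
          rw [hs1, Nat.mul_one] at this
          exact this
        · exact h
      exact false_of_not_ppow hdeg hdvd hmaxord hgmax rfl hp hp3 hpm hs2
  · rintro (⟨hc, p, k, hp, hcard⟩ | ⟨p, hp, hexp⟩) <;> intro u v <;> rw [deg_eq, deg_eq]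
    · exact regular_of_cyclic_ppow hc hp hcard u.val v.val u.prop v.prop
    · exact regular_of_prime_exponent hp hexp u.val v.val u.prop v.prop
end

section
/- Let p be a prime and let G be a finite p-group. If x is an element of order p in G, then x is adjacent in 𝒢*(G) to every other vertex of the connected component of 𝒢*(G) containing x. -/
open Subgroup

lemma zpowers_isCyclic' {G : Type*} [Group G] (u : G) : IsCyclic (zpowers u) := by
  refine ⟨⟨⟨u, mem_zpowers u⟩, fun x => ?_⟩⟩
  obtain ⟨k, hk⟩ := x.2
  exact ⟨k, Subtype.ext (by simpa using hk)⟩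

lemma aux_order_p_mem {G : Type*} [Group G] [Fintype G] {p : ℕ} (hp : p.Prime)
    {u x w : G} (hx : orderOf x = p) (hw : orderOf w = p)
    (hxu : x ∈ zpowers u) (hwu : w ∈ zpowers u) : x ∈ zpowers w := by
  classical
  haveI : IsCyclic (zpowers u) := zpowers_isCyclic' u
  set H := zpowers u
  set x' : H := ⟨x, hxu⟩ with hx'def
  set w' : H := ⟨w, hwu⟩ with hw'def
  have hx' : orderOf x' = p := by rw [Subgroup.orderOf_mk]; exact hx
  have hw' : orderOf w' = p := by rw [Subgroup.orderOf_mk]; exact hw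
  have hwp : w' ^ p = 1 := by rw [← hw']; exact pow_orderOf_eq_one w'
  have hT := IsCyclic.card_pow_eq_one_le (α := H) (n := p) hp.pos
  have hsub : (zpowers w' : Set H).toFinset ⊆ ({a : H | a ^ p = 1} : Finset H) := by
    intro b hb
    simp only [Set.mem_toFinset, SetLike.mem_coe] at hb
    obtain ⟨k, hk⟩ := hb
    simp only [Finset.mem_filter, Finset.mem_univ, true_and, Set.mem_setOf_eq]
    rw [← hk, ← zpow_natCast, ← zpow_mul, mul_comm, zpow_mul, zpow_natCast, hwp, one_zpow]
  have hcard : ((zpowers w' : Set H).toFinset).card = p := by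
    rw [Set.toFinset_card, ← Nat.card_eq_fintype_card]
    simp only [SetLike.coe_sort_coe, Nat.card_zpowers]
    exact hw'
  have heq : (zpowers w' : Set H).toFinset = ({a : H | a ^ p = 1} : Finset H) :=
    Finset.eq_of_subset_of_card_le hsub (by rw [hcard]; exact hT)
  have hxmem : x' ∈ (zpowers w' : Set H).toFinset := by
    rw [heq]
    simp only [Finset.mem_filter, Finset.mem_univ, true_and, Set.mem_setOf_eq]
    rw [← hx']; exact pow_orderOf_eq_one x'
  rw [Set.mem_toFinset, SetLike.mem_coe] at hxmem
  obtain ⟨k, hk⟩ := hxmem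
  exact ⟨k, congrArg Subtype.val hk⟩

lemma aux_step {G : Type*} [Group G] [Fintype G] {p : ℕ} (hp : p.Prime)
    (hpg : IsPGroup p G) {x u v : G} (hx : orderOf x = p)
    (hxu : x ∈ zpowers u) (hv1 : v ≠ 1) (hvu : v ∈ zpowers u) : x ∈ zpowers v := by
  haveI : Fact p.Prime := ⟨hp⟩
  obtain ⟨m, hm⟩ := (IsPGroup.iff_orderOf.mp hpg) v
  have hm1 : 1 ≤ m := by
    by_contra h
    have : m = 0 := by omega
    subst this
    simp at hm
    exact hv1 hm
  set w := v ^ (p ^ (m - 1)) with hwdef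
  have hworder : orderOf w = p := by
    rw [hwdef, orderOf_pow, hm, Nat.gcd_eq_right (pow_dvd_pow p (by omega))]
    have h1 : p ^ m = p ^ (m - 1) * p := by
      rw [← pow_succ]; congr 1; omega
    rw [h1, Nat.mul_div_cancel_left _ (pow_pos hp.pos _)]
  have hwu : w ∈ zpowers u := pow_mem hvu _
  have hxw : x ∈ zpowers w := aux_order_p_mem hp hx hworder hxu hwu
  have hwv : w ∈ zpowers v := by rw [hwdef]; exact pow_mem (mem_zpowers v) _
  exact (zpowers_le.mpr hwv) hxw

/-- In a finite `p`-group, any element `x` of order `p` is adjacent in `𝒢*(G)` to every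
other vertex of the connected component of `𝒢*(G)` containing `x`. -/
theorem stmt_10 (G : Type*) [Group G] [Fintype G] (p : ℕ) (hp : p.Prime)
    (hG : ∃ k : ℕ, Fintype.card G = p ^ k) (x : G) (hx : orderOf x = p)
    (hx1 : x ≠ 1) :
    ∀ y : ↥{g : G | g ≠ 1},
      ((powerGraph G).induce {g : G | g ≠ 1}).Reachable ⟨x, hx1⟩ y →
        (y : G) ≠ x → ((powerGraph G).induce {g : G | g ≠ 1}).Adj ⟨x, hx1⟩ y := by
  obtain ⟨k, hk⟩ := hG
  have hpg : IsPGroup p G := IsPGroup.of_card (by rw [Nat.card_eq_fintype_card]; exact hk)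
  intro y hreach hyx
  have key : ∀ (a b : ↥{g : G | g ≠ 1}),
      ((powerGraph G).induce {g : G | g ≠ 1}).Reachable a b →
      x ∈ zpowers (a : G) → x ∈ zpowers (b : G) := by
    intro a b h
    obtain ⟨w⟩ := h
    induction w with
    | nil => exact id
    | @cons a c b hadj q ih =>
      intro hxa
      apply ih
      have hadj' : (powerGraph G).Adj (a : G) (c : G) := hadj
      rcases hadj'.2 with ⟨n, _, hc⟩ | ⟨m, _, ha⟩
      · exact aux_step hp hpg hx hxa c.2 (hc ▸ pow_mem (mem_zpowers (a : G)) n)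
      · have hac : (a : G) ∈ zpowers (c : G) := ha ▸ pow_mem (mem_zpowers (c : G)) m
        exact (zpowers_le.mpr hac) hxa
  have hxy : x ∈ zpowers (y : G) := key _ _ hreach (mem_zpowers x)
  rw [← mem_powers_iff_mem_zpowers] at hxy
  obtain ⟨n, hn⟩ := hxy
  have hn0 : 0 < n := by
    rcases Nat.eq_zero_or_pos n with h0 | h0
    · subst h0; simp at hn; exact absurd hn.symm hx1
    · exact h0
  show (powerGraph G).Adj x (y : G)
  exact ⟨fun h => hyx h.symm, Or.inr ⟨n, hn0, hn.symm⟩⟩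
end

section
/- Let G be a finite group whose power graph 𝒢(G) is non-complete and minimally edge-connected. If G has a maximal subgroup of order two, then every non-identity element of G has order two, i.e., G is an elementary abelian 2-group of rank at least 2. -/
open Subgroup

open SimpleGraph

private lemma reach_mono {V : Type*} {A B : SimpleGraph V}
    (h : ∀ x y, A.Adj x y → B.Reachable x y) {x y : V} (hr : A.Reachable x y) :
    B.Reachable x y := by
  obtain ⟨w⟩ := hr
  induction w with
  | nil => exact Reachable.refl _
  | cons h' _ ih => exact (h _ _ h').trans ih

private lemma not_conn_of_isolated {V : Type*} {A : SimpleGraph V} {t v : V} (hv : v ≠ t)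
    (h : ∀ u, ¬ A.Adj t u) : ¬ A.Connected := by
  intro hc
  obtain ⟨w⟩ := hc.preconnected t v
  cases w with
  | nil => exact hv rfl
  | cons h' _ => exact h _ h'

private lemma disconnect_all {V : Type*} [Fintype V] [Nontrivial V] (A : SimpleGraph V) :
    ∃ s : Finset (Sym2 V), ↑s ⊆ A.edgeSet ∧ ¬ (A.deleteEdges ↑s).Connected := by
  classical
  refine ⟨(A.edgeSet.toFinite).toFinset, by rw [Set.Finite.coe_toFinset], ?_⟩
  intro hc
  obtain ⟨v, t, hvt⟩ := exists_pair_ne V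
  obtain ⟨w⟩ := hc.preconnected v t
  cases w with
  | nil => exact hvt rfl
  | cons h' _ =>
    rw [deleteEdges_adj] at h'
    exact h'.2 (by simpa [Set.Finite.mem_toFinset] using h'.1)

private lemma key_lemma {V : Type*} [Fintype V] (Γ : SimpleGraph V)
    (hmin : MinimallyEdgeConnected Γ) {t a b : V}
    (hab : Γ.Adj a b)
    (hN : ∀ u, Γ.Adj t u → Γ.Adj u a ∧ Γ.Adj u b ∧ u ≠ a ∧ u ≠ b) :
    False := by
  classical
  obtain ⟨hnt, hconn, hdel⟩ := hmin
  haveI := hnt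
  set c : ℕ := edgeConn Γ with hc
  -- c ≥ 1
  have hc1 : 1 ≤ c := by
    rcases Nat.eq_zero_or_pos c with h0 | h
    · exfalso
      obtain ⟨s₀, hs₀, hd₀⟩ := disconnect_all Γ
      have hne : {k | ∃ s : Finset (Sym2 V), s.card = k ∧ ↑s ⊆ Γ.edgeSet ∧
          ¬ (Γ.deleteEdges ↑s).Connected}.Nonempty := ⟨s₀.card, s₀, rfl, hs₀, hd₀⟩
      have hmem := Nat.sInf_mem hne
      have h0' : (0 : ℕ) ∈ {k | ∃ s : Finset (Sym2 V), s.card = k ∧ ↑s ⊆ Γ.edgeSet ∧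
          ¬ (Γ.deleteEdges ↑s).Connected} := by
        have : sInf {k | ∃ s : Finset (Sym2 V), s.card = k ∧ ↑s ⊆ Γ.edgeSet ∧
          ¬ (Γ.deleteEdges ↑s).Connected} = c := rfl
        rwa [this, h0] at hmem
      obtain ⟨s, hcard, -, hdisc⟩ := h0'
      rw [Finset.card_eq_zero] at hcard
      subst hcard
      rw [Finset.coe_empty, SimpleGraph.deleteEdges_empty] at hdisc
      exact hdisc hconn
    · exact h
  -- the neighbor finset of t
  set NT : Finset V := ((Γ.neighborSet t).toFinite).toFinset with hNT
  have hNTmem : ∀ u, u ∈ NT ↔ Γ.Adj t u := by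
    intro u; simp [hNT, Set.Finite.mem_toFinset, SimpleGraph.mem_neighborSet]
  -- c ≤ NT.card
  have hcd : c ≤ NT.card := by
    set st : Finset (Sym2 V) := NT.image (fun u => s(t, u)) with hst
    have hcardst : st.card = NT.card := by
      apply Finset.card_image_of_injOn
      intro u hu u' hu' heq
      rcases Sym2.eq_iff.1 heq with ⟨-, h2⟩ | ⟨h1, -⟩
      · exact h2
      · exact absurd h1 ((hNTmem u').1 (by simpa using hu')).ne
    have hsub : ↑st ⊆ Γ.edgeSet := by
      intro e he
      simp only [hst, Finset.coe_image, Set.mem_image, Finset.mem_coe] at he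
      obtain ⟨u, hu, rfl⟩ := he
      exact Γ.mem_edgeSet.2 ((hNTmem u).1 hu)
    have hdisc : ¬ (Γ.deleteEdges ↑st).Connected := by
      obtain ⟨v, hv⟩ := exists_ne t
      refine not_conn_of_isolated hv ?_
      intro u hadj
      rw [SimpleGraph.deleteEdges_adj] at hadj
      exact hadj.2 (by
        simp only [hst, Finset.coe_image, Set.mem_image, Finset.mem_coe]
        exact ⟨u, (hNTmem u).2 hadj.1, rfl⟩)
    have : c ≤ st.card := Nat.sInf_le ⟨st, rfl, hsub, hdisc⟩
    omega
  -- apply minimality at the edge s(a,b)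
  have he : s(a, b) ∈ Γ.edgeSet := Γ.mem_edgeSet.2 hab
  have hd := hdel s(a, b) he
  set Γe : SimpleGraph V := Γ.deleteEdges {s(a, b)} with hΓe
  -- every disconnecting edge set of Γe has at least c edges
  have hlow : ∀ k ∈ {k | ∃ s : Finset (Sym2 V), s.card = k ∧ ↑s ⊆ Γe.edgeSet ∧
      ¬ (Γe.deleteEdges ↑s).Connected}, c ≤ k := by
    rintro k ⟨s, hk, hsub, hdisc⟩
    set Δ : SimpleGraph V := Γe.deleteEdges ↑s with hΔ
    by_cases hr : Δ.Reachable a b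
    · -- then s alone disconnects Γ
      have hsub' : ↑s ⊆ Γ.edgeSet := by
        refine hsub.trans ?_
        rw [hΓe, SimpleGraph.edgeSet_deleteEdges]
        exact Set.diff_subset
      have hnc2 : ¬ (Γ.deleteEdges ↑s).Connected := by
        intro hc2
        apply hdisc
        haveI : Nonempty V := hc2.nonempty
        have hmono : ∀ x y, (Γ.deleteEdges ↑s).Adj x y → Δ.Reachable x y := by
          intro x y hxy
          rw [SimpleGraph.deleteEdges_adj] at hxy
          by_cases hxe : s(x, y) = s(a, b)
          · rcases Sym2.eq_iff.1 hxe with ⟨rfl, rfl⟩ | ⟨rfl, rfl⟩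
            · exact hr
            · exact hr.symm
          · refine SimpleGraph.Adj.reachable ?_
            rw [hΔ, SimpleGraph.deleteEdges_adj, hΓe, SimpleGraph.deleteEdges_adj]
            exact ⟨⟨hxy.1, by simpa using hxe⟩, hxy.2⟩
        exact ⟨fun x y => reach_mono hmono (hc2.preconnected x y)⟩
      have : c ≤ s.card := Nat.sInf_le ⟨s, rfl, hsub', hnc2⟩
      omega
    · -- injection from NT into s
      have habne : a ≠ b := hab.ne
      have hstep : ∀ u ∈ NT, (if s(u, a) ∈ s then s(u, a) else s(u, b)) ∈ s := by
        intro u hu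
        obtain ⟨hua, hub, hune_a, hune_b⟩ := hN u ((hNTmem u).1 hu)
        split_ifs with h1
        · exact h1
        · by_contra h2
          apply hr
          have h3 : Δ.Adj a u := by
            rw [hΔ, SimpleGraph.deleteEdges_adj, hΓe, SimpleGraph.deleteEdges_adj]
            refine ⟨⟨hua.symm, ?_⟩, ?_⟩
            · simp only [Set.mem_singleton_iff]
              intro hcon
              rcases Sym2.eq_iff.1 hcon with ⟨-, h5⟩ | ⟨h4, -⟩
              · exact hune_b h5
              · exact habne h4
            · rw [Sym2.eq_swap]
              exact fun hx => h1 (by exact_mod_cast hx)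
          have h4 : Δ.Adj u b := by
            rw [hΔ, SimpleGraph.deleteEdges_adj, hΓe, SimpleGraph.deleteEdges_adj]
            refine ⟨⟨hub, ?_⟩, fun hx => h2 (by exact_mod_cast hx)⟩
            simp only [Set.mem_singleton_iff]
            intro hcon
            rcases Sym2.eq_iff.1 hcon with ⟨h5, -⟩ | ⟨h5, -⟩
            · exact hune_a h5
            · exact hune_b h5
          exact h3.reachable.trans h4.reachable
      have hinj : Set.InjOn (fun u => if s(u, a) ∈ s then s(u, a) else s(u, b)) ↑NT := by
        intro u hu u' hu' heq
        obtain ⟨-, -, hu_a, hu_b⟩ := hN u ((hNTmem u).1 (by simpa using hu))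
        obtain ⟨-, -, hu'_a, hu'_b⟩ := hN u' ((hNTmem u').1 (by simpa using hu'))
        simp only at heq
        split_ifs at heq with h1 h2 h2
        all_goals rcases Sym2.eq_iff.1 heq with ⟨h3, h4⟩ | ⟨h3, h4⟩
        all_goals first
          | exact h3
          | exact absurd h3 hu_a
          | exact absurd h3 hu_b
          | exact absurd h4 habne
          | exact absurd h4.symm habne
      have hcard_le : NT.card ≤ s.card :=
        Finset.card_le_card_of_injOn _ hstep hinj
      omega
  -- conclude
  have hnee : {k | ∃ s : Finset (Sym2 V), s.card = k ∧ ↑s ⊆ Γe.edgeSet ∧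
      ¬ (Γe.deleteEdges ↑s).Connected}.Nonempty := by
    obtain ⟨s₀, hs₀, hd₀⟩ := disconnect_all Γe
    exact ⟨s₀.card, s₀, rfl, hs₀, hd₀⟩
  have hmem := Nat.sInf_mem hnee
  have hfin : c ≤ edgeConn Γe := hlow _ hmem
  rw [hd] at hfin
  omega

section GroupPart

variable {G : Type*} [Group G] [Fintype G]

private lemma adj_one {x : G} (hx : x ≠ 1) : (powerGraph G).Adj 1 x :=
  ⟨hx.symm, Or.inr ⟨orderOf x, orderOf_pos x, (pow_orderOf_eq_one x).symm⟩⟩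

private lemma adj_of_gen {u x : G} (hu : zpowers u = ⊤) (hx : x ≠ 1)
    (hxg : zpowers x ≠ ⊤) : (powerGraph G).Adj u x := by
  have hmem : x ∈ Submonoid.powers u := mem_powers_iff_mem_zpowers.2 (hu ▸ Subgroup.mem_top x)
  obtain ⟨k, hk'⟩ := hmem
  have hk : u ^ k = x := hk'
  have hk0 : k ≠ 0 := by
    rintro rfl
    rw [pow_zero] at hk
    exact hx hk.symm
  exact ⟨fun h => hxg (h ▸ hu), Or.inl ⟨k, Nat.pos_of_ne_zero hk0, hk.symm⟩⟩

private lemma neighbor_of_t {t u : G} (ht2 : orderOf t = 2) (hco : IsCoatom (zpowers t))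
    (hadj : (powerGraph G).Adj t u) : u = 1 ∨ zpowers u = ⊤ := by
  obtain ⟨hne, h | h⟩ := hadj
  · obtain ⟨n, -, rfl⟩ := h
    have hpm := pow_mod_orderOf t n
    rw [ht2] at hpm
    rcases Nat.mod_two_eq_zero_or_one n with h0 | h1
    · rw [h0] at hpm
      exact Or.inl (by rw [← hpm, pow_zero])
    · rw [h1] at hpm
      exact absurd (by rw [← hpm, pow_one]) hne.symm
  · obtain ⟨m, -, hmeq⟩ := h
    have htu : zpowers t ≤ zpowers u :=
      zpowers_le.2 (mem_powers_iff_mem_zpowers.1 ⟨m, hmeq.symm⟩)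
    rcases eq_or_lt_of_le htu with heq | hlt
    · left
      have humem : u ∈ Submonoid.powers t :=
        mem_powers_iff_mem_zpowers.2 (heq ▸ Subgroup.mem_zpowers u)
      obtain ⟨k, hk'⟩ := humem
      have hk : t ^ k = u := hk'
      have hpm := pow_mod_orderOf t k
      rw [ht2] at hpm
      rcases Nat.mod_two_eq_zero_or_one k with h0 | h1
      · rw [h0] at hpm
        rw [← hk, ← hpm, pow_zero]
      · rw [h1] at hpm
        exact absurd (by rw [← hk, ← hpm, pow_one]) hne.symm
    · exact Or.inr (hco.2 _ hlt)

private lemma finisher (hmin : MinimallyEdgeConnected (powerGraph G))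
    {t a : G} (ht2 : orderOf t = 2) (hco : IsCoatom (zpowers t))
    (ha1 : a ≠ 1) (ha2 : a ^ 2 ≠ 1) (hag : zpowers a ≠ ⊤) : False := by
  have hbne : a ≠ a ^ 2 := by
    intro h
    apply ha1
    have h2 : a * 1 = a * a := by rw [mul_one, ← pow_two, ← h]
    exact (mul_left_cancel h2).symm
  have hbg : zpowers (a ^ 2) ≠ ⊤ := by
    intro h
    apply hag
    have hle : zpowers (a ^ 2) ≤ zpowers a :=
      zpowers_le.2 ((zpowers a).pow_mem (Subgroup.mem_zpowers a) 2)
    exact top_unique (h ▸ hle)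
  have hab : (powerGraph G).Adj a (a ^ 2) := ⟨hbne, Or.inl ⟨2, by norm_num, rfl⟩⟩
  refine key_lemma (powerGraph G) hmin (t := t) hab ?_
  intro u hu
  rcases neighbor_of_t ht2 hco hu with rfl | hgen
  · exact ⟨adj_one ha1, adj_one ha2, (Ne.symm ha1), (Ne.symm ha2)⟩
  · exact ⟨adj_of_gen hgen ha1 hag, adj_of_gen hgen ha2 hbg,
      fun h => hag (h ▸ hgen), fun h => hbg (h ▸ hgen)⟩

end GroupPart

/-- If the power graph of a finite group is non-complete and minimally edge-connected
and the group has a maximal subgroup of order two, then every non-identity element has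
order two, i.e. `G` is an elementary abelian 2-group of rank at least 2. -/
theorem stmt_12 (G : Type*) [Group G] [Fintype G]
    (hnc : powerGraph G ≠ ⊤) (hmin : MinimallyEdgeConnected (powerGraph G))
    (hmax : ∃ H : Subgroup G, Nat.card H = 2 ∧ IsCoatom H) :
    (∀ x : G, x ≠ 1 → orderOf x = 2) ∧ 4 ≤ Fintype.card G := by
  obtain ⟨H, hH2, hco⟩ := hmax
  haveI hHnt : Nontrivial H := Finite.one_lt_card_iff_nontrivial.1 (by omega)
  obtain ⟨t', ht'⟩ := exists_ne (1 : H)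
  set t : G := (t' : G) with htdef
  have htH : t ∈ H := t'.2
  have htne : t ≠ 1 := by
    intro h
    apply ht'
    apply Subtype.coe_injective
    show (t' : G) = ((1 : H) : G)
    rw [OneMemClass.coe_one]
    exact h
  have hdvd : orderOf t ∣ 2 := hH2 ▸ Subgroup.orderOf_dvd_natCard H htH
  have ht2 : orderOf t = 2 := by
    rcases (Nat.prime_two).eq_one_or_self_of_dvd _ hdvd with h | h
    · exact absurd (orderOf_eq_one_iff.1 h) htne
    · exact h
  have hHt : zpowers t = H := by
    apply Subgroup.eq_of_le_of_card_ge (zpowers_le.2 htH)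
    rw [Nat.card_zpowers, ht2, hH2]
  rw [← hHt] at hco
  have P : ∀ x : G, x ≠ 1 → orderOf x = 2 := by
    intro x hx1
    by_contra hx2
    have hxo : 3 ≤ orderOf x := by
      have h1 := orderOf_pos x
      have h3 : orderOf x ≠ 1 := by simpa [orderOf_eq_one_iff] using hx1
      omega
    have hxsq : x ^ 2 ≠ 1 := by
      intro h
      have hdd : orderOf x ∣ 2 := orderOf_dvd_of_pow_eq_one h
      have := Nat.le_of_dvd (by norm_num) hdd
      omega
    by_cases hxg : zpowers x = ⊤
    · -- cyclic case
      have hcard : Nat.card G = orderOf x := by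
        rw [← Nat.card_zpowers x, hxg, Subgroup.card_top]
      have h2dvd : 2 ∣ orderOf x := by
        have hh := orderOf_dvd_natCard t
        rw [hcard, ht2] at hh
        exact hh
      by_cases hn4 : orderOf x = 4
      · -- G ≅ C4 : contradiction with non-completeness
        have hpair : ∃ u v : G, u ≠ v ∧ ¬ (powerGraph G).Adj u v := by
          by_contra hcon
          push_neg at hcon
          apply hnc
          ext u v
          simp only [SimpleGraph.top_adj]
          exact ⟨fun h => h.1, fun h => hcon u v h⟩
        obtain ⟨u, v, huv, hnadj⟩ := hpair
        have hfact : ∀ w z : G, w ≠ z → ¬ (powerGraph G).Adj w z →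
            w ≠ 1 ∧ zpowers w ≠ ⊤ := by
          intro w z hwz hna
          constructor
          · rintro rfl
            exact hna (adj_one (Ne.symm hwz))
          · intro hwtop
            obtain ⟨k, hk'⟩ := mem_powers_iff_mem_zpowers.2 (hwtop ▸ Subgroup.mem_top z)
            have hk : w ^ k = z := hk'
            rcases Nat.eq_zero_or_pos k with rfl | hkpos
            · rw [pow_zero] at hk
              rw [← hk] at hwz hna
              exact hna (adj_one hwz).symm
            · exact hna ⟨hwz, Or.inl ⟨k, hkpos, hk.symm⟩⟩
        obtain ⟨hu1, hug⟩ := hfact u v huv hnadj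
        obtain ⟨hv1, hvg⟩ := hfact v u huv.symm (fun h => hnadj h.symm)
        have hux : ∀ w : G, w ≠ 1 → zpowers w ≠ ⊤ → w = x ^ 2 := by
          intro w hw1 hwg
          obtain ⟨k, hk'⟩ := mem_powers_iff_mem_zpowers.2 (hxg ▸ Subgroup.mem_top w)
          have hk : x ^ k = w := hk'
          have hpm := pow_mod_orderOf x k
          rw [hn4] at hpm
          have hklt : k % 4 = 0 ∨ k % 4 = 1 ∨ k % 4 = 2 ∨ k % 4 = 3 := by omega
          rcases hklt with h | h | h | h <;> rw [h] at hpm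
          · exact absurd (by rw [← hk, ← hpm, pow_zero]) hw1
          · exact absurd (by rw [← hk, ← hpm, pow_one]; exact hxg) hwg
          · rw [← hk, ← hpm]
          · exfalso
            apply hwg
            have hw3 : w = x ^ 3 := by rw [← hk, ← hpm]
            have h9 := pow_mod_orderOf x 9
            rw [hn4] at h9
            norm_num at h9
            have hx9 : x = w ^ 3 := by
              rw [hw3, ← pow_mul]
              norm_num
              exact h9
            have hxw : zpowers x ≤ zpowers w :=
              zpowers_le.2 (mem_powers_iff_mem_zpowers.1 ⟨3, hx9.symm⟩)
            exact top_unique (hxg ▸ hxw)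
        have := (hux u hu1 hug).trans (hux v hv1 hvg).symm
        exact huv this
      · -- use a := x ^ 2
        refine finisher hmin ht2 hco hxsq ?_ ?_
        · intro h
          rw [← pow_mul] at h
          have hdd : orderOf x ∣ 4 := orderOf_dvd_of_pow_eq_one (by rw [← h])
          have h4 := Nat.le_of_dvd (by norm_num) hdd
          have h34 : orderOf x = 3 ∨ orderOf x = 4 := by omega
          rcases h34 with h3 | h4'
          · rw [h3] at hdd
            norm_num at hdd
          · exact hn4 h4'
        · intro htop
          obtain ⟨k, hk'⟩ := mem_powers_iff_mem_zpowers.2 (htop ▸ Subgroup.mem_top x)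
          have hk : x ^ (2 * k) = x := by rw [pow_mul]; exact hk'
          have hk0 : k ≠ 0 := by
            rintro rfl
            rw [mul_zero, pow_zero] at hk
            exact hx1 hk.symm
          have hkk : x ^ (2 * k - 1) = 1 := by
            have hstep : x ^ (2 * k - 1) * x = x ^ (2 * k) := by
              rw [← pow_succ]
              congr 1
              omega
            rw [hk] at hstep
            exact mul_right_cancel (hstep.trans (one_mul x).symm)
          have hdvd2 : orderOf x ∣ 2 * k - 1 := orderOf_dvd_of_pow_eq_one hkk
          obtain ⟨d, hd⟩ := dvd_trans h2dvd hdvd2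
          omega
    · exact finisher hmin ht2 hco hx1 hxsq hxg
  refine ⟨P, ?_⟩
  by_contra hlt
  push_neg at hlt
  have hcard1 : 1 ≤ Fintype.card G := Fintype.card_pos
  by_cases h3 : Fintype.card G = 3
  · haveI : Nontrivial G := Fintype.one_lt_card_iff_nontrivial.1 (by omega)
    obtain ⟨y, hy⟩ := exists_ne (1 : G)
    have h2 := P y hy
    have hdc := orderOf_dvd_card (x := y)
    rw [h2, h3] at hdc
    norm_num at hdc
  · have hle2 : Fintype.card G ≤ 2 := by omega
    apply hnc
    ext u v
    simp only [SimpleGraph.top_adj]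
    refine ⟨fun h => h.1, ?_⟩
    intro huv
    have h1 : u = 1 ∨ v = 1 := by
      by_contra hcon
      push_neg at hcon
      have h2lt : 2 < Fintype.card G :=
        Fintype.two_lt_card_iff.2 ⟨u, v, 1, huv, hcon.1, hcon.2⟩
      omega
    rcases h1 with rfl | rfl
    · exact adj_one (Ne.symm huv)
    · exact (adj_one huv).symm
end

section
/- Let G be a finite group whose power graph 𝒢(G) is non-complete and minimally edge-connected, and suppose G has a maximal subgroup of order two. Then the edge-connectivity of 𝒢(G) equals 1 and 𝒢(G) is a tree. -/
open Subgroup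

section GraphHelpers

variable {V : Type*}

lemma pg_reachable_transfer (Γ : SimpleGraph V) {v w : V}
    (h : (Γ.deleteEdges {s(v,w)}).Reachable v w)
    {a b : V} (hab : Γ.Reachable a b) : (Γ.deleteEdges {s(v,w)}).Reachable a b := by
  obtain ⟨p⟩ := hab
  induction p with
  | nil => exact SimpleGraph.Reachable.refl _
  | @cons a c b ha _ ih =>
    refine SimpleGraph.Reachable.trans ?_ ih
    by_cases he : s(a, c) = s(v, w)
    · rcases Sym2.eq_iff.mp he with ⟨rfl, rfl⟩ | ⟨rfl, rfl⟩
      · exact h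
      · exact h.symm
    · exact (SimpleGraph.deleteEdges_adj.mpr ⟨ha, by simpa using he⟩).reachable

lemma pg_cutset_nonempty (Γ : SimpleGraph V) [Fintype V] [Nontrivial V] :
    {k | ∃ s : Finset (Sym2 V), s.card = k ∧ ↑s ⊆ Γ.edgeSet ∧
      ¬ (Γ.deleteEdges ↑s).Connected}.Nonempty := by
  classical
  refine ⟨_, Γ.edgeSet.toFinite.toFinset, rfl, by rw [Set.Finite.coe_toFinset], ?_⟩
  have hbot : Γ.deleteEdges ↑(Γ.edgeSet.toFinite.toFinset) = ⊥ := by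
    ext a b
    simp [SimpleGraph.deleteEdges_adj, Set.Finite.coe_toFinset]
  rw [hbot]
  intro hc
  obtain ⟨a, b, hab⟩ := exists_pair_ne V
  obtain ⟨p⟩ := hc.preconnected a b
  cases p with
  | nil => exact hab rfl
  | cons h _ => exact h

lemma pg_one_le_edgeConn (Γ : SimpleGraph V) [Fintype V] [Nontrivial V]
    (hc : Γ.Connected) : 1 ≤ edgeConn Γ := by
  rw [Nat.one_le_iff_ne_zero]
  intro h0
  unfold edgeConn at h0
  rcases Nat.sInf_eq_zero.mp h0 with h | h
  · obtain ⟨s, hs0, _, hnc⟩ := h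
    rw [Finset.card_eq_zero] at hs0
    subst hs0
    simp only [Finset.coe_empty, SimpleGraph.deleteEdges_empty] at hnc
    exact hnc hc
  · exact (pg_cutset_nonempty Γ).ne_empty h

lemma pg_edgeConn_le_degree (Γ : SimpleGraph V) [Fintype V] (x w : V) (hw : w ≠ x) :
    edgeConn Γ ≤ gDegree Γ x := by
  classical
  have hfin : (Γ.incidenceSet x).Finite := Set.toFinite _
  have hdeg : hfin.toFinset.card = gDegree Γ x := by
    rw [← Set.ncard_eq_toFinset_card _ hfin, gDegree,
      ← Nat.card_coe_set_eq, ← Nat.card_coe_set_eq]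
    exact Nat.card_congr (Γ.incidenceSetEquivNeighborSet x)
  refine Nat.sInf_le ⟨hfin.toFinset, hdeg, ?_, ?_⟩
  · rw [Set.Finite.coe_toFinset]; exact Γ.incidenceSet_subset x
  · intro hc
    obtain ⟨p⟩ := hc.preconnected x w
    cases p with
    | nil => exact hw rfl
    | @cons _ c _ h _ =>
      rw [SimpleGraph.deleteEdges_adj, Set.Finite.coe_toFinset] at h
      exact h.2 ⟨h.1, Sym2.mem_mk_left x c⟩

end GraphHelpers

section GroupHelpers

variable {G : Type*} [Group G] [Fintype G]

lemma pg_univ_adj (v w : G) (hv : ∀ u : G, u ∈ zpowers v) (hw : w ≠ v) :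
    (powerGraph G).Adj v w := by
  obtain ⟨n, hn⟩ := mem_powers_iff_mem_zpowers.mpr (hv w)
  have hn' : v ^ n = w := hn
  refine ⟨hw.symm, Or.inl ?_⟩
  rcases Nat.eq_zero_or_pos n with rfl | hpos
  · exact ⟨orderOf v, orderOf_pos v, by rw [pow_orderOf_eq_one, ← hn', pow_zero]⟩
  · exact ⟨n, hpos, hn'.symm⟩

lemma pg_one_adj (w : G) (hw : w ≠ 1) : (powerGraph G).Adj 1 w :=
  ⟨fun h => hw h.symm, Or.inr ⟨orderOf w, orderOf_pos w, (pow_orderOf_eq_one w).symm⟩⟩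

lemma pg_exists_invol (H : Subgroup G) (hH2 : Nat.card H = 2) :
    ∃ t : G, t ∈ H ∧ t ≠ 1 ∧ t ^ 2 = 1 ∧ (H : Set G) = {1, t} := by
  have hnt : Nontrivial H := Finite.one_lt_card_iff_nontrivial.mp (by omega)
  obtain ⟨t', ht'⟩ := exists_ne (1 : H)
  have ht1 : (t' : G) ≠ 1 := fun h => ht' (OneMemClass.coe_eq_one.mp h)
  refine ⟨(t' : G), t'.2, ht1, ?_, ?_⟩
  · have hdvd : orderOf (t' : G) ∣ 2 := by
      rw [orderOf_coe]
      exact hH2 ▸ orderOf_dvd_natCard t'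
    have hne1 : orderOf (t' : G) ≠ 1 := fun h => ht1 (orderOf_eq_one_iff.mp h)
    rcases (Nat.prime_two.eq_one_or_self_of_dvd _ hdvd) with h | h
    · exact absurd h hne1
    · exact h ▸ pow_orderOf_eq_one (t' : G)
  · refine (Set.eq_of_subset_of_ncard_le ?_ ?_ (Set.toFinite _)).symm
    · rintro x (rfl | rfl)
      · exact H.one_mem
      · exact t'.2
    · have h1 : ((H : Set G)).ncard = 2 := by
        rw [← Nat.card_coe_set_eq]
        simpa using hH2
      have h2 : ({1, (t' : G)} : Set G).ncard = 2 := Set.ncard_pair (Ne.symm ht1)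
      omega

end GroupHelpers

/-- If the power graph of a finite group is non-complete and minimally edge-connected
and the group has a maximal subgroup of order two, then the edge-connectivity of the
power graph is 1 and the power graph is a tree. -/
theorem stmt_14 (G : Type*) [Group G] [Fintype G]
    (hnc : powerGraph G ≠ ⊤) (hmin : MinimallyEdgeConnected (powerGraph G))
    (hmax : ∃ H : Subgroup G, Nat.card H = 2 ∧ IsCoatom H) :
    edgeConn (powerGraph G) = 1 ∧ (powerGraph G).IsTree := by
  classical
  obtain ⟨H, hH2, hHco⟩ := hmax
  obtain ⟨t, htH, ht1, ht2, hHset⟩ := pg_exists_invol H hH2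
  obtain ⟨hnontriv, hconn, hdrop⟩ := hmin
  haveI : Nontrivial G := hnontriv
  have hmemH : ∀ x ∈ H, x = 1 ∨ x = t := by
    intro x hx
    rw [← SetLike.mem_coe, hHset] at hx
    simpa using hx
  -- Key lemma: any neighbour of `t` is the identity or a generator of `G`.
  have hA : ∀ v : G, (powerGraph G).Adj t v → v = 1 ∨ ∀ u : G, u ∈ zpowers v := by
    intro v hadj
    obtain ⟨hne, hcase⟩ := hadj
    rcases hcase with ⟨n, hn, rfl⟩ | ⟨m, hm, htv⟩
    · rcases Nat.even_or_odd n with ⟨k, rfl⟩ | ⟨k, rfl⟩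
      · left; rw [← two_mul, pow_mul, ht2, one_pow]
      · exfalso; apply hne
        rw [pow_succ, pow_mul, ht2, one_pow, one_mul]
    · have htz : t ∈ zpowers v := ⟨(m : ℤ), by show v ^ (m : ℤ) = t; rw [zpow_natCast, ← htv]⟩
      have hle : H ≤ zpowers v := by
        intro x hx
        rcases hmemH x hx with rfl | rfl
        · exact one_mem _
        · exact htz
      rcases eq_or_lt_of_le hle with heq | hlt
      · have hv : v ∈ H := by rw [heq]; exact mem_zpowers v
        rcases hmemH v hv with rfl | rfl
        · exact Or.inl rfl
        · exact absurd rfl hne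
      · right
        have htop := hHco.2 _ hlt
        intro u; rw [htop]; trivial
  -- t is not adjacent to everything (else the power graph would be complete)
  have hnotall : ∃ w : G, w ≠ t ∧ ¬ (powerGraph G).Adj t w := by
    by_contra hall
    push_neg at hall
    apply hnc
    ext u v
    simp only [SimpleGraph.top_adj]
    constructor
    · exact fun h => h.1
    · intro hne
      by_cases hu : u = t
      · subst hu; exact hall v (Ne.symm hne)
      · rcases hA u (hall u hu) with rfl | huniv
        · exact pg_one_adj v (Ne.symm hne)
        · exact pg_univ_adj u v huniv (Ne.symm hne)
  obtain ⟨w0, hw0t, hw0adj⟩ := hnotall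
  have hdegle : gDegree (powerGraph G) t ≤ Fintype.card G - 2 := by
    have hsub : (powerGraph G).neighborSet t ⊆ (Set.univ \ {t, w0}) := by
      intro v hv
      refine ⟨trivial, ?_⟩
      intro hm
      rcases hm with rfl | rfl
      · exact (powerGraph G).irrefl hv
      · exact hw0adj hv
    calc gDegree (powerGraph G) t ≤ (Set.univ \ {t, w0}).ncard :=
          Set.ncard_le_ncard hsub (Set.toFinite _)
      _ = Fintype.card G - 2 := by
          rw [Set.ncard_diff (Set.subset_univ _), Set.ncard_univ,
            Set.ncard_pair (Ne.symm hw0t), Nat.card_eq_fintype_card]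
  have hκle : edgeConn (powerGraph G) ≤ Fintype.card G - 2 :=
    (pg_edgeConn_le_degree _ t 1 (Ne.symm ht1)).trans hdegle
  have hκ1 := pg_one_le_edgeConn _ hconn
  by_cases hcase : ∃ g : G, (powerGraph G).Adj t g ∧ g ≠ 1
  · -- leads to a contradiction
    exfalso
    obtain ⟨g, hadjtg, hg1⟩ := hcase
    have hguniv : ∀ u : G, u ∈ zpowers g := by
      rcases hA g hadjtg with rfl | h
      · exact absurd rfl hg1
      · exact h
    have hgt : g ≠ t := hadjtg.ne'
    have hcardG : 3 ≤ Fintype.card G := by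
      have h1tg : (1 : G) ∉ ({t, g} : Finset G) := by
        simp only [Finset.mem_insert, Finset.mem_singleton]
        push_neg
        exact ⟨Ne.symm ht1, Ne.symm hg1⟩
      have htg : t ∉ ({g} : Finset G) := by simpa using Ne.symm hgt
      have h3 : ({1, t, g} : Finset G).card = 3 := by
        rw [Finset.card_insert_of_notMem h1tg, Finset.card_insert_of_notMem htg,
          Finset.card_singleton]
      calc 3 = ({1, t, g} : Finset G).card := h3.symm
        _ ≤ Fintype.card G := by rw [← Finset.card_univ]; exact Finset.card_le_univ _
    have hadjg1 : (powerGraph G).Adj g 1 := pg_univ_adj g 1 hguniv (Ne.symm hg1)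
    have he : s(g, (1:G)) ∈ (powerGraph G).edgeSet := hadjg1
    have hdel := hdrop _ he
    set Γ' := (powerGraph G).deleteEdges {s(g, (1:G))} with hΓ'
    have hmemInf := Nat.sInf_mem (pg_cutset_nonempty Γ')
    have hκ'def : edgeConn Γ' = sInf {k | ∃ s : Finset (Sym2 G), s.card = k ∧
        ↑s ⊆ Γ'.edgeSet ∧ ¬ (Γ'.deleteEdges ↑s).Connected} := rfl
    rw [← hκ'def, hdel] at hmemInf
    obtain ⟨S, hScard, hSsub, hSdisc⟩ := hmemInf
    set Γ'' := Γ'.deleteEdges (↑S : Set (Sym2 G)) with hΓ''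
    have hΔconn : ((powerGraph G).deleteEdges (↑S : Set (Sym2 G))).Connected := by
      by_contra hnc'
      have hle : edgeConn (powerGraph G) ≤ S.card :=
        Nat.sInf_le ⟨S, rfl,
          hSsub.trans (SimpleGraph.edgeSet_mono (SimpleGraph.deleteEdges_le _)), hnc'⟩
      omega
    have hcomm : Γ'' = ((powerGraph G).deleteEdges (↑S : Set (Sym2 G))).deleteEdges
        {s(g, (1:G))} := by
      rw [hΓ'', hΓ', SimpleGraph.deleteEdges_deleteEdges,
        SimpleGraph.deleteEdges_deleteEdges, Set.union_comm]
    obtain ⟨x, y, hxy⟩ : ∃ x y : G, ¬ Γ''.Reachable x y := by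
      by_contra hall
      push_neg at hall
      exact hSdisc ((SimpleGraph.connected_iff _).mpr ⟨fun a b => hall a b, ⟨1⟩⟩)
    obtain ⟨w1, hw1⟩ : ∃ w1 : G, ¬ Γ''.Reachable g w1 := by
      by_contra hall
      push_neg at hall
      exact hxy ((hall x).symm.trans (hall y))
    by_cases h1A : Γ''.Reachable g 1
    · apply hw1
      rw [hcomm] at h1A ⊢
      exact pg_reachable_transfer _ h1A (hΔconn.preconnected g w1)
    · -- counting argument
      have hmain : ∀ u : G, u ≠ 1 → u ≠ g →
          (if Γ''.Reachable g u then s(u, (1:G)) else s(u, g)) ∈ S := by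
        intro u hu1 hug
        by_cases hu : Γ''.Reachable g u
        · rw [if_pos hu]
          by_contra hnS
          apply h1A
          refine hu.trans (SimpleGraph.Adj.reachable ?_)
          rw [hΓ'', SimpleGraph.deleteEdges_adj, hΓ', SimpleGraph.deleteEdges_adj]
          refine ⟨⟨(pg_one_adj u hu1).symm, ?_⟩, hnS⟩
          intro hmem
          rcases Sym2.eq_iff.mp (Set.mem_singleton_iff.mp hmem) with ⟨ha, _⟩ | ⟨ha, hb⟩
          · exact hug ha
          · exact hu1 ha
        · rw [if_neg hu]
          by_contra hnS
          apply hu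
          have hadj : Γ''.Adj u g := by
            rw [hΓ'', SimpleGraph.deleteEdges_adj, hΓ', SimpleGraph.deleteEdges_adj]
            refine ⟨⟨(pg_univ_adj g u hguniv hug).symm, ?_⟩, hnS⟩
            intro hmem
            rcases Sym2.eq_iff.mp (Set.mem_singleton_iff.mp hmem) with ⟨ha, _⟩ | ⟨ha, _⟩
            · exact hug ha
            · exact hu1 ha
          exact hadj.reachable.symm
      set D : Finset G := (Finset.univ.erase 1).erase g with hD
      have hDcard : D.card = Fintype.card G - 2 := by
        rw [hD, Finset.card_erase_of_mem
            (Finset.mem_erase.mpr ⟨hg1, Finset.mem_univ g⟩),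
          Finset.card_erase_of_mem (Finset.mem_univ 1), Finset.card_univ]
        omega
      have hinj : Set.InjOn (fun u => if Γ''.Reachable g u then s(u, (1:G)) else s(u, g))
          (↑D : Set G) := by
        intro a ha b hb hab
        obtain ⟨hag, ha'⟩ := Finset.mem_erase.mp (Finset.mem_coe.mp ha)
        obtain ⟨ha1, _⟩ := Finset.mem_erase.mp ha'
        obtain ⟨hbg, hb'⟩ := Finset.mem_erase.mp (Finset.mem_coe.mp hb)
        obtain ⟨hb1, _⟩ := Finset.mem_erase.mp hb'
        dsimp only at hab
        by_cases hra : Γ''.Reachable g a <;> by_cases hrb : Γ''.Reachable g b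
        · rw [if_pos hra, if_pos hrb] at hab
          rcases Sym2.eq_iff.mp hab with ⟨h1, _⟩ | ⟨h1, h2⟩
          · exact h1
          · exact absurd h2.symm hb1
        · rw [if_pos hra, if_neg hrb] at hab
          rcases Sym2.eq_iff.mp hab with ⟨h1, h2⟩ | ⟨h1, h2⟩
          · exact absurd h2.symm hg1
          · exact absurd h1 hag
        · rw [if_neg hra, if_pos hrb] at hab
          rcases Sym2.eq_iff.mp hab with ⟨h1, h2⟩ | ⟨h1, h2⟩
          · exact absurd h2 hg1
          · exact absurd h1 ha1
        · rw [if_neg hra, if_neg hrb] at hab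
          rcases Sym2.eq_iff.mp hab with ⟨h1, _⟩ | ⟨h1, h2⟩
          · exact h1
          · exact absurd h1 hag
      have hcard : D.card ≤ S.card := by
        refine Finset.card_le_card_of_injOn _ (fun u hu => ?_) hinj
        obtain ⟨hug, hu'⟩ := Finset.mem_erase.mp hu
        obtain ⟨hu1, _⟩ := Finset.mem_erase.mp hu'
        exact hmain u hu1 hug
      omega
  · -- the neighbourhood of t is {1}: edge connectivity is 1 and the graph is a tree
    have hadjt1 : (powerGraph G).Adj t 1 := ⟨ht1, Or.inl ⟨2, two_pos, ht2.symm⟩⟩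
    push_neg at hcase
    have hNS : (powerGraph G).neighborSet t = {1} := by
      ext v
      simp only [SimpleGraph.mem_neighborSet, Set.mem_singleton_iff]
      exact ⟨fun h => hcase v h, fun h => h ▸ hadjt1⟩
    have hdeg1 : gDegree (powerGraph G) t = 1 := by
      rw [gDegree, hNS, Set.ncard_singleton]
    have hle : edgeConn (powerGraph G) ≤ 1 :=
      hdeg1 ▸ pg_edgeConn_le_degree _ t 1 (Ne.symm ht1)
    have hk1 : edgeConn (powerGraph G) = 1 := le_antisymm hle hκ1
    refine ⟨hk1, hconn, ?_⟩
    rw [SimpleGraph.isAcyclic_iff_forall_edge_isBridge]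
    intro e he
    revert he
    refine Sym2.ind (fun u v he => ?_) e
    have hdel := hdrop _ he
    rw [hk1] at hdel
    rw [SimpleGraph.isBridge_iff]
    intro hreach
    have hreach' : ((powerGraph G).deleteEdges {s(u,v)}).Reachable u v := hreach
    have hconn' : ((powerGraph G).deleteEdges {s(u,v)}).Connected := by
      rw [SimpleGraph.connected_iff _]
      exact ⟨fun a b => pg_reachable_transfer _ hreach' (hconn.preconnected a b), ⟨1⟩⟩
    have := pg_one_le_edgeConn _ hconn'
    omega
end

section
/- Let G be a finite group in which every maximal cyclic subgroup is generated by an element of order greater than 2, and suppose the power graph 𝒢(G) is minimally edge-connected. Then the exponent of G equals δ(𝒢(G)) + 1. -/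
open Subgroup

section AuxProofs

open SimpleGraph

variable {V : Type*}

private lemma pg_no_adj_not_connected {Γ : SimpleGraph V} [Nontrivial V]
    (h : ∀ a b : V, ¬ Γ.Adj a b) : ¬ Γ.Connected := by
  intro hc
  obtain ⟨a, b, hab⟩ := exists_pair_ne V
  obtain ⟨w⟩ := hc.preconnected a b
  cases w with
  | nil => exact hab rfl
  | cons h' _ => exact h _ _ h'

private lemma pg_deleteEdges_all_not_connected (Γ : SimpleGraph V) [Nontrivial V]
    (s : Set (Sym2 V)) (hs : Γ.edgeSet ⊆ s) : ¬ (Γ.deleteEdges s).Connected := by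
  apply pg_no_adj_not_connected
  intro a b hab
  rw [SimpleGraph.deleteEdges_adj] at hab
  exact hab.2 (hs hab.1)

private lemma pg_reachable_restore {Γ : SimpleGraph V} {s : Set (Sym2 V)} {e : Sym2 V}
    (hre : ∀ x y : V, e = s(x, y) → (Γ.deleteEdges s).Reachable x y)
    {u v : V} (h : (Γ.deleteEdges (s \ {e})).Reachable u v) :
    (Γ.deleteEdges s).Reachable u v := by
  obtain ⟨w⟩ := h
  induction w with
  | nil => exact Reachable.refl _
  | @cons a b c hadj w ih =>
    refine Reachable.trans ?_ ih
    rw [SimpleGraph.deleteEdges_adj] at hadj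
    obtain ⟨hab, hmem⟩ := hadj
    by_cases hes : s(a, b) ∈ s
    · have heq : s(a, b) = e := by
        by_contra hne
        exact hmem ⟨hes, hne⟩
      exact hre a b heq.symm
    · exact SimpleGraph.Adj.reachable
        (by rw [SimpleGraph.deleteEdges_adj]; exact ⟨hab, hes⟩)

end AuxProofs

section PowerGraphAux

open Subgroup

variable {G : Type*} [Group G] [Fintype G]

private lemma pg_adj_one {z : G} (hz : z ≠ 1) : (powerGraph G).Adj 1 z :=
  ⟨Ne.symm hz, Or.inr ⟨orderOf z, orderOf_pos z, (pow_orderOf_eq_one z).symm⟩⟩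

private lemma pg_exists_maxCyclic (x : G) :
    ∃ y : G, IsMaxCyclicGen y ∧ x ∈ zpowers y := by
  classical
  set S : Set (Subgroup G) := {H | (∃ z : G, H = zpowers z) ∧ x ∈ H} with hS
  have hfin : S.Finite := Set.toFinite S
  have hne : S.Nonempty := ⟨zpowers x, ⟨x, rfl⟩, mem_zpowers x⟩
  obtain ⟨H, hHS, hmax⟩ := Set.Finite.exists_maximalFor id S hfin hne
  obtain ⟨⟨y, rfl⟩, hxH⟩ := hHS
  refine ⟨y, ?_, hxH⟩
  intro z hle
  have hzS : zpowers z ∈ S := ⟨⟨z, rfl⟩, hle hxH⟩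
  exact le_antisymm hle (hmax hzS hle)

private lemma pg_mem_zpowers_nat_pow {x y : G} (h : x ∈ zpowers y) :
    ∃ n : ℕ, x = y ^ n := by
  haveI := Classical.decEq G
  obtain ⟨n, hn⟩ := mem_powers_iff_mem_zpowers.mpr h
  exact ⟨n, hn.symm⟩

/-- The neighborhood of a maximal cyclic generator is exactly `⟨y⟩ \ {y}`. -/
private lemma pg_neighborSet_maxCyclic {y : G} (hy : IsMaxCyclicGen y) :
    (powerGraph G).neighborSet y = (zpowers y : Set G) \ {y} := by
  ext w
  simp only [SimpleGraph.mem_neighborSet, Set.mem_diff, Set.mem_singleton_iff]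
  constructor
  · rintro ⟨hne, h | h⟩
    · obtain ⟨n, -, rfl⟩ := h
      exact ⟨pow_mem (mem_zpowers y) n, Ne.symm hne⟩
    · obtain ⟨m, -, hm⟩ := h
      have hle : zpowers y ≤ zpowers w := by
        rw [Subgroup.zpowers_le]
        exact hm ▸ pow_mem (mem_zpowers w) m
      have := hy w hle
      exact ⟨this ▸ mem_zpowers w, Ne.symm hne⟩
  · rintro ⟨hw, hne⟩
    obtain ⟨n, rfl⟩ := pg_mem_zpowers_nat_pow hw
    refine ⟨Ne.symm hne, Or.inl ⟨n + orderOf y, Nat.add_pos_right n (orderOf_pos y), ?_⟩⟩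
    rw [pow_add, pow_orderOf_eq_one, mul_one]

private lemma pg_degree_maxCyclic {y : G} (hy : IsMaxCyclicGen y) :
    gDegree (powerGraph G) y = orderOf y - 1 := by
  rw [gDegree, pg_neighborSet_maxCyclic hy,
    Set.ncard_diff_singleton_of_mem (mem_zpowers y)]
  congr 1
  rw [← Nat.card_coe_set_eq, SetLike.coe_sort_coe, Nat.card_zpowers]

end PowerGraphAux

section MainLemma

open Subgroup SimpleGraph

/-- Under minimal edge-connectivity, every non-identity vertex of the power graph
has minimum degree. -/
private lemma pg_deg_eq_minDegree {G : Type*} [Group G] [Fintype G]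
    (hmin : MinimallyEdgeConnected (powerGraph G)) {z : G} (hz : z ≠ 1) :
    gDegree (powerGraph G) z = gMinDegree (powerGraph G) := by
  classical
  haveI : Nontrivial G := hmin.1
  set Γ := powerGraph G with hΓ
  set δ := gMinDegree Γ with hδ
  set c := edgeConn Γ with hcdef
  -- the defining set for edge connectivity is nonempty
  have hCSne : {k | ∃ s : Finset (Sym2 G), s.card = k ∧ ↑s ⊆ Γ.edgeSet ∧
      ¬ (Γ.deleteEdges ↑s).Connected}.Nonempty := by
    refine ⟨_, Γ.edgeSet.toFinset, rfl, by simp, ?_⟩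
    exact pg_deleteEdges_all_not_connected Γ _ (by simp)
  have hcCS : c ∈ {k | ∃ s : Finset (Sym2 G), s.card = k ∧ ↑s ⊆ Γ.edgeSet ∧
      ¬ (Γ.deleteEdges ↑s).Connected} := Nat.sInf_mem hCSne
  -- c ≥ 1
  have hc1 : 1 ≤ c := by
    by_contra h
    obtain ⟨s, hcard, -, hdisc⟩ := hcCS
    have hc0 : c = 0 := by omega
    rw [hc0, Finset.card_eq_zero] at hcard
    subst hcard
    rw [Finset.coe_empty, SimpleGraph.deleteEdges_empty] at hdisc
    exact hdisc hmin.2.1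
  -- δ is attained
  obtain ⟨x₀, hx₀⟩ : ∃ x₀ : G, gDegree Γ x₀ = δ := by
    have := Nat.sInf_mem (Set.range_nonempty (gDegree Γ))
    exact this
  -- c ≤ δ : star cut around x₀
  have hcδ : c ≤ δ := by
    have hfin : (Γ.incidenceSet x₀).Finite := Set.toFinite _
    refine Nat.sInf_le ⟨hfin.toFinset, ?_, ?_, ?_⟩
    · rw [← Set.ncard_eq_toFinset_card _ hfin, ← hx₀]
      rw [gDegree, ← Nat.card_coe_set_eq, ← Nat.card_coe_set_eq]
      exact Nat.card_congr (Γ.incidenceSetEquivNeighborSet x₀)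
    · rw [Set.Finite.coe_toFinset]; exact Γ.incidenceSet_subset x₀
    · intro hcon
      obtain ⟨y₀, hy₀⟩ := exists_ne x₀
      obtain ⟨w⟩ := hcon.preconnected x₀ y₀
      cases w with
      | nil => exact hy₀ rfl
      | cons hadj _ =>
        rw [SimpleGraph.deleteEdges_adj, Set.Finite.coe_toFinset] at hadj
        exact hadj.2 ⟨Γ.mem_edgeSet.mpr hadj.1, Sym2.mem_mk_left _ _⟩
  -- δ ≤ deg z
  have hδz : δ ≤ gDegree Γ z := Nat.sInf_le ⟨z, rfl⟩
  -- delete the edge {1, z}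
  have hadj1z : Γ.Adj 1 z := pg_adj_one hz
  have he : s((1:G), z) ∈ Γ.edgeSet := Γ.mem_edgeSet.mpr hadj1z
  have h1 : edgeConn (Γ.deleteEdges {s((1:G), z)}) = c - 1 := hmin.2.2 _ he
  set Γe := Γ.deleteEdges {s((1:G), z)} with hΓe
  have hCSene : {k | ∃ s : Finset (Sym2 G), s.card = k ∧ ↑s ⊆ Γe.edgeSet ∧
      ¬ (Γe.deleteEdges ↑s).Connected}.Nonempty := by
    refine ⟨_, Γe.edgeSet.toFinset, rfl, by simp, ?_⟩
    exact pg_deleteEdges_all_not_connected Γe _ (by simp)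
  have hcm : c - 1 ∈ {k | ∃ s : Finset (Sym2 G), s.card = k ∧ ↑s ⊆ Γe.edgeSet ∧
      ¬ (Γe.deleteEdges ↑s).Connected} := by
    rw [← h1]; exact Nat.sInf_mem hCSene
  obtain ⟨s', hcard', hsub', hdisc'⟩ := hcm
  have hes' : s((1:G), z) ∉ s' := by
    intro hmem
    have := hsub' hmem
    rw [hΓe, SimpleGraph.edgeSet_deleteEdges] at this
    exact this.2 rfl
  set s : Finset (Sym2 G) := insert s((1:G), z) s' with hs
  have hesmem : s((1:G), z) ∈ s := Finset.mem_insert_self _ _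
  have hcards : s.card = c := by
    rw [hs, Finset.card_insert_of_notMem hes', hcard']; omega
  have hsubs : (↑s : Set (Sym2 G)) ⊆ Γ.edgeSet := by
    rw [hs, Finset.coe_insert]
    refine Set.insert_subset he (hsub'.trans ?_)
    rw [hΓe, SimpleGraph.edgeSet_deleteEdges]
    exact Set.diff_subset
  have hdel : Γ.deleteEdges ↑s = Γe.deleteEdges ↑s' := by
    rw [hs, Finset.coe_insert, Set.insert_eq, hΓe,
      SimpleGraph.deleteEdges_deleteEdges]
  have hdisc : ¬ (Γ.deleteEdges ↑s).Connected := by rw [hdel]; exact hdisc'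
  set Γ' := Γ.deleteEdges (↑s : Set (Sym2 G)) with hΓ'
  set A : Set G := {w | Γ'.Reachable 1 w} with hA
  have h1A : (1 : G) ∈ A := Reachable.refl _
  have hnp : ¬ Γ'.Preconnected := fun hp => hdisc (SimpleGraph.Connected.mk hp)
  obtain ⟨u, v, huv⟩ : ∃ u v : G, ¬ Γ'.Reachable u v := by
    by_contra h; push_neg at h; exact hnp h
  -- z is not in the component of 1
  have hzA : z ∉ A := by
    intro hzA
    have hcoe : (↑(s.erase s((1:G), z)) : Set (Sym2 G)) = ↑s \ {s((1:G), z)} :=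
      Finset.coe_erase _ s
    have hrr : ∀ p q : G, (Γ.deleteEdges ↑(s.erase s((1:G), z))).Reachable p q →
        Γ'.Reachable p q := by
      intro p q h
      rw [hcoe] at h
      refine pg_reachable_restore ?_ h
      intro x y hxy
      rw [Sym2.eq_iff] at hxy
      rcases hxy with ⟨h1', h2'⟩ | ⟨h1', h2'⟩
      · rw [← h1', ← h2']; exact hzA
      · rw [← h1', ← h2']; exact hzA.symm
    have hle : c ≤ (s.erase s((1:G), z)).card := by
      refine Nat.sInf_le ⟨s.erase s((1:G), z), rfl, ?_, ?_⟩
      · exact (Finset.coe_subset.mpr (Finset.erase_subset _ _)).trans hsubs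
      · intro hcon
        exact huv (hrr u v (hcon.preconnected u v))
    rw [Finset.card_erase_of_mem hesmem, hcards] at hle
    omega
  -- all edges crossing from A to Aᶜ are in s
  have hcross : ∀ a b : G, a ∈ A → b ∉ A → Γ.Adj a b →
      s(a, b) ∈ (↑s : Set (Sym2 G)) := by
    intro a b ha hb hab
    by_contra h
    have : Γ'.Adj a b := by rw [hΓ', SimpleGraph.deleteEdges_adj]; exact ⟨hab, h⟩
    exact hb (ha.trans this.reachable)
  -- counting
  set N := Γ.neighborSet z with hN
  set S1 : Set (Sym2 G) := (fun a => s(z, a)) '' (N ∩ A) with hS1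
  set S2 : Set (Sym2 G) := (fun b => s((1:G), b)) '' (Aᶜ \ {z}) with hS2
  have hsub1 : S1 ⊆ ↑s := by
    rintro x ⟨a, ⟨haN, haA⟩, rfl⟩
    have := hcross a z haA hzA (Γ.adj_symm haN)
    rwa [Sym2.eq_swap] at this
  have hsub2 : S2 ⊆ ↑s := by
    rintro x ⟨b, ⟨hbA, hbz⟩, rfl⟩
    have hb1 : b ≠ 1 := fun h => hbA (h ▸ h1A)
    exact hcross 1 b h1A hbA (pg_adj_one hb1)
  have hz1 : z ∉ ({1} : Set G) := by simpa using hz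
  have hdisj : Disjoint S1 S2 := by
    rw [Set.disjoint_left]
    rintro x ⟨a, ⟨haN, haA⟩, rfl⟩ ⟨b, ⟨hbA, hbz⟩, hbe⟩
    rw [Sym2.eq_iff] at hbe
    rcases hbe with ⟨h1', h2'⟩ | ⟨h1', h2'⟩
    · exact hzA (h1' ▸ h1A)
    · exact hbz h2'
  have hinj1 : Set.InjOn (fun a => s(z, a)) (N ∩ A) := by
    intro a ha a' ha' h
    simp only [Sym2.eq_iff] at h
    rcases h with ⟨-, h⟩ | ⟨h1', h2'⟩
    · exact h
    · exact absurd (h2' ▸ ha.2) hzA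
  have hinj2 : Set.InjOn (fun b => s((1:G), b)) (Aᶜ \ {z}) := by
    intro b hb b' hb' h
    simp only [Sym2.eq_iff] at h
    rcases h with ⟨-, h⟩ | ⟨h1', h2'⟩
    · exact h
    · exact absurd (h2' ▸ h1A) hb.1
  have hNA : N \ A ⊆ Aᶜ \ {z} := by
    rintro w ⟨hwN, hwA⟩
    refine ⟨hwA, ?_⟩
    intro hwz
    rw [Set.mem_singleton_iff] at hwz
    subst hwz
    exact Γ.irrefl hwN
  have hchain : gDegree Γ z ≤ c := by
    calc gDegree Γ z = (N ∩ A).ncard + (N \ A).ncard :=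
          (Set.ncard_inter_add_ncard_diff_eq_ncard N A (Set.toFinite N)).symm
      _ ≤ (N ∩ A).ncard + (Aᶜ \ {z}).ncard := by
          exact Nat.add_le_add_left (Set.ncard_le_ncard hNA (Set.toFinite _)) _
      _ = S1.ncard + S2.ncard := by
          rw [hS1, hS2, Set.ncard_image_of_injOn hinj1, Set.ncard_image_of_injOn hinj2]
      _ = (S1 ∪ S2).ncard :=
          (Set.ncard_union_eq hdisj (Set.toFinite _) (Set.toFinite _)).symm
      _ ≤ (↑s : Set (Sym2 G)).ncard :=
          Set.ncard_le_ncard (Set.union_subset hsub1 hsub2) (Set.toFinite _)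
      _ = s.card := Set.ncard_coe_finset s
      _ = c := hcards
  omega

end MainLemma

/-- If every maximal cyclic subgroup of a finite group is generated by an element of
order greater than 2 and the power graph is minimally edge-connected, then the
exponent of the group equals the minimum degree of the power graph plus one. -/
theorem stmt_15 (G : Type*) [Group G] [Fintype G]
    (hgen : ∀ y : G, IsMaxCyclicGen y → 2 < orderOf y)
    (hmin : MinimallyEdgeConnected (powerGraph G)) :
    Monoid.exponent G = gMinDegree (powerGraph G) + 1 := by
  haveI : Nontrivial G := hmin.1
  set δ := gMinDegree (powerGraph G) with hδ
  have key : ∀ y : G, IsMaxCyclicGen y → orderOf y = δ + 1 := by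
    intro y hy
    have hy1 : y ≠ 1 := by
      intro h
      obtain ⟨x, hx⟩ := exists_ne (1 : G)
      have hle : zpowers y ≤ zpowers x := by
        rw [h, Subgroup.zpowers_le]; exact one_mem _
      have heq := hy x hle
      have hx1 : x ∈ zpowers y := heq ▸ mem_zpowers x
      rw [h] at hx1
      obtain ⟨n, hn⟩ := pg_mem_zpowers_nat_pow hx1
      rw [one_pow] at hn
      exact hx hn
    have hdeg := pg_deg_eq_minDegree hmin hy1
    rw [pg_degree_maxCyclic hy] at hdeg
    have := orderOf_pos y
    omega
  have hdvd1 : Monoid.exponent G ∣ δ + 1 := by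
    apply Monoid.exponent_dvd_of_forall_pow_eq_one
    intro x
    obtain ⟨y, hy, hxy⟩ := pg_exists_maxCyclic x
    have hd := orderOf_dvd_of_mem_zpowers hxy
    rw [key y hy] at hd
    exact orderOf_dvd_iff_pow_eq_one.mp hd
  have hdvd2 : δ + 1 ∣ Monoid.exponent G := by
    obtain ⟨y, hy, -⟩ := pg_exists_maxCyclic (1 : G)
    rw [← key y hy]
    exact Monoid.order_dvd_exponent y
  exact Nat.dvd_antisymm hdvd1 hdvd2
end
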